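/- arXiv:2203.03907 — 5 statements merged into one kernel-verified Lean document; each statement's English description precedes it below -/
import Mathlib

section
/- Let F be a k-dimensional face of the integer hull P_I = conv(P ∩ Z^n). Then for every integer point x ∈ F ∩ Z^n, the number of indices i ∈ {1,…,m} whose slack is large, i.e. |{i : b_i − (A x)_i ≥ Δ}|, is at most m − n + k. -/
open Matrix Set

/-- The real matrix obtained from an integer matrix by casting entries. -/
noncomputable def matR {m n : ℕ} (A : Matrix (Fin m) (Fin n) ℤ) :
    Matrix (Fin m) (Fin n) ℝ := A.map (fun a => (a : ℝ))

/-- The polyhedron `P = {x ∈ ℝⁿ : A x ≤ b}`. -/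
def poly {m n : ℕ} (A : Matrix (Fin m) (Fin n) ℤ) (b : Fin m → ℤ) :
    Set (Fin n → ℝ) := {x | ∀ i, (matR A).mulVec x i ≤ (b i : ℝ)}

/-- The set of integer points of `ℝⁿ`. -/
def intPts {n : ℕ} : Set (Fin n → ℝ) := {x | ∀ j, ∃ z : ℤ, x j = (z : ℝ)}

/-- The integer hull `P_I = conv(P ∩ ℤⁿ)`. -/
noncomputable def intHull {m n : ℕ} (A : Matrix (Fin m) (Fin n) ℤ) (b : Fin m → ℤ) :
    Set (Fin n → ℝ) := convexHull ℝ (poly A b ∩ intPts)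

/-- `Δ(A)`: the maximum absolute value of determinants of all `n × n` submatrices of `A`. -/
def maxAbsSubdet {m n : ℕ} (A : Matrix (Fin m) (Fin n) ℤ) : ℕ :=
  Finset.univ.sup fun f : Fin n → Fin m => ((A.submatrix f id).det).natAbs

/-- The rank (over `ℝ`) of the submatrix of `A` formed by the rows indexed by `J`. -/
noncomputable def rowsRank {m n : ℕ} (A : Matrix (Fin m) (Fin n) ℤ) (J : Finset (Fin m)) : ℕ :=
  ((matR A).submatrix (fun i : {i // i ∈ J} => (i : Fin m)) id).rank

section Aux

variable {m n : ℕ}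

/-- Casting integer dot products to the reals. -/
lemma castDot (u v : Fin n → ℤ) :
    ((u ⬝ᵥ v : ℤ) : ℝ) = (fun j => (u j : ℝ)) ⬝ᵥ (fun j => (v j : ℝ)) := by
  simp [dotProduct]

lemma castMulVec (A : Matrix (Fin m) (Fin n) ℤ) (v : Fin n → ℤ) (i : Fin m) :
    (matR A).mulVec (fun j => (v j : ℝ)) i = ((A.mulVec v i : ℤ) : ℝ) := by
  simp [Matrix.mulVec, dotProduct, matR]

lemma polyConvex (A : Matrix (Fin m) (Fin n) ℤ) (b : Fin m → ℤ) :
    Convex ℝ (poly A b) := by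
  intro y hy z hz a c ha hc hac
  intro i
  have h1 := hy i
  have h2 := hz i
  have h3 : (matR A).mulVec (a • y + c • z) i
      = a * (matR A).mulVec y i + c * (matR A).mulVec z i := by
    simp [Matrix.mulVec_add, Matrix.mulVec_smul]
  rw [h3]
  have := mul_le_mul_of_nonneg_left h1 ha
  have := mul_le_mul_of_nonneg_left h2 hc
  have : a * ((b i : ℝ)) + c * ((b i : ℝ)) = (b i : ℝ) := by rw [← add_mul, hac, one_mul]
  linarith

lemma intHull_subset_poly (A : Matrix (Fin m) (Fin n) ℤ) (b : Fin m → ℤ) :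
    intHull A b ⊆ poly A b :=
  convexHull_min inter_subset_left (polyConvex A b)

end Aux

/-- If `F` is a `k`-dimensional face of the integer hull `P_I = conv(P ∩ ℤⁿ)`, then for every
integer point `x ∈ F ∩ ℤⁿ` the number of indices `i` with slack `b_i - (A x)_i ≥ Δ` is at most
`m - n + k`. -/
theorem face_large_slack_count {m n k : ℕ}
    (A : Matrix (Fin m) (Fin n) ℤ) (b : Fin m → ℤ) (Δ : ℕ)
    (hΔ : maxAbsSubdet A = Δ) (hΔ1 : 1 ≤ Δ)
    (hrank : (matR A).rank = n)
    (hfull : affineSpan ℝ (poly A b) = ⊤)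
    (F : Set (Fin n → ℝ)) (hF : IsExtreme ℝ (intHull A b) F)
    (hFconv : Convex ℝ F) (hFne : F.Nonempty)
    (hFdim : Module.finrank ℝ (affineSpan ℝ F).direction = k) :
    ∀ x : Fin n → ℤ, (fun j => (x j : ℝ)) ∈ F →
      (Finset.univ.filter fun i : Fin m => (Δ : ℤ) ≤ b i - A.mulVec x i).card ≤ m - n + k := by
  classical
  intro x hxF
  by_contra hcard
  push_neg at hcard
  set AR := matR A with hARdef
  -- x satisfies the integer inequalities
  have hxP : ∀ i, A.mulVec x i ≤ b i := by
    intro i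
    have h1 : (fun j => (x j : ℝ)) ∈ poly A b :=
      intHull_subset_poly A b (hF.1 hxF)
    have h2 := h1 i
    rw [castMulVec] at h2
    exact_mod_cast h2
  -- counting
  have hnm : n ≤ m := by
    have h1 := AR.rank_le_card_height
    rw [hrank] at h1
    simpa using h1
  have hsplit := Finset.card_filter_add_card_filter_not
    (s := (Finset.univ : Finset (Fin m))) (p := fun i : Fin m => (Δ : ℤ) ≤ b i - A.mulVec x i)
  rw [Finset.card_univ, Fintype.card_fin] at hsplit
  set Sc := Finset.univ.filter (fun i : Fin m => ¬ ((Δ : ℤ) ≤ b i - A.mulVec x i)) with hScdef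
  have hScn : Sc.card + k + 1 ≤ n := by omega
  -- pick a maximal independent subset of the small-slack rows
  set t : Set (Fin n → ℝ) := (fun i => AR i) '' (↑Sc : Set (Fin m)) with htdef
  have htfin : t.Finite := Sc.finite_toSet.image _
  obtain ⟨s, hst, hspan_st, hsli⟩ := exists_linearIndependent ℝ t
  have hsfin : s.Finite := htfin.subset hst
  have hsncard : s.ncard ≤ Sc.card := by
    calc s.ncard ≤ t.ncard := Set.ncard_le_ncard hst htfin
      _ ≤ (↑Sc : Set (Fin m)).ncard := Set.ncard_image_le Sc.finite_toSet
      _ = Sc.card := Set.ncard_coe_finset Sc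
  have hsr : s ⊆ Set.range AR := by
    refine hst.trans ?_
    rintro _ ⟨i, -, rfl⟩
    exact ⟨i, rfl⟩
  -- extend to a basis made of rows of A
  set bs := (show LinearIndepOn ℝ id s from hsli).extend hsr with hbsdef
  have hbsub : bs ⊆ Set.range AR := (show LinearIndepOn ℝ id s from hsli).extend_subset hsr
  have hsbs : s ⊆ bs := (show LinearIndepOn ℝ id s from hsli).subset_extend hsr
  have hbsli : LinearIndependent ℝ ((↑) : bs → (Fin n → ℝ)) := (show LinearIndepOn ℝ id s from hsli).linearIndepOn_extend hsr
  have hspanR : Submodule.span ℝ (Set.range AR) = ⊤ := by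
    apply Submodule.eq_top_of_finrank_eq
    rw [show Set.range AR = Set.range AR.row from rfl, ← Matrix.rank_eq_finrank_span_row, hrank, Module.finrank_fin_fun]
  have hspanbs : Submodule.span ℝ bs = ⊤ := by
    apply le_antisymm le_top
    rw [← hspanR]
    exact Submodule.span_le.mpr ((show LinearIndepOn ℝ id s from hsli).subset_span_extend hsr)
  have hbsfin : bs.Finite := (Set.finite_range AR).subset hbsub
  haveI : Fintype bs := hbsfin.fintype
  let B : Module.Basis bs ℝ (Fin n → ℝ) :=
    Module.Basis.mk hbsli (by rw [Subtype.range_coe]; exact hspanbs.ge)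
  have hcardbs : Fintype.card bs = n := by
    have h1 := Module.finrank_eq_card_basis B
    rw [Module.finrank_fin_fun] at h1
    omega
  set e : Fin n ≃ bs := (Fintype.equivFinOfCardEq hcardbs).symm with hedef
  -- choose row indices realizing the basis
  have hgex : ∀ v : bs, ∃ i : Fin m, AR i = (v : Fin n → ℝ) := fun v => hbsub v.2
  choose g hg using hgex
  set N : Matrix (Fin n) (Fin n) ℤ := A.submatrix (fun j => g (e j)) id with hNdef
  have hNrow : ∀ j : Fin n, (fun jj => ((N j jj : ℤ) : ℝ)) = ((e j : Fin n → ℝ)) := by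
    intro j
    rw [← hg (e j)]
    rfl
  have hNli : LinearIndependent ℝ (fun j : Fin n => (fun jj => ((N j jj : ℤ) : ℝ))) := by
    have h1 : (fun j : Fin n => (fun jj => ((N j jj : ℤ) : ℝ)))
        = (fun v : bs => (v : Fin n → ℝ)) ∘ e := by
      funext j
      exact hNrow j
    rw [h1]
    exact hbsli.comp e e.injective
  have hdet : N.det ≠ 0 := by
    have h1 : IsUnit (matR N) := by
      rw [← Matrix.linearIndependent_rows_iff_isUnit]
      exact hNli
    have h2 : IsUnit (matR N).det := (Matrix.isUnit_iff_isUnit_det _).mp h1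
    have h3 : (matR N).det = ((N.det : ℤ) : ℝ) := by
      rw [show matR N = (Int.castRingHom ℝ).mapMatrix N from rfl, ← RingHom.map_det]
      rfl
    rw [h3, isUnit_iff_ne_zero] at h2
    exact_mod_cast h2
  -- the Cramer directions
  set dvec : Fin n → Fin n → ℤ := fun j0 jj => Nᵀ.cramer (Pi.single jj 1) j0 with hdvecdef
  have hdot : ∀ (a : Fin n → ℤ) (j0 : Fin n), a ⬝ᵥ dvec j0 = Nᵀ.cramer a j0 := by
    intro a j0
    have ha : (∑ jj, a jj • Pi.single jj (1 : ℤ)) = a := by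
      funext j'
      simp [Pi.single_apply]
    calc a ⬝ᵥ dvec j0 = ∑ jj, a jj * Nᵀ.cramer (Pi.single jj 1) j0 := rfl
      _ = (∑ jj, a jj • Nᵀ.cramer (Pi.single jj 1)) j0 := by
          simp [Finset.sum_apply]
      _ = Nᵀ.cramer (∑ jj, a jj • Pi.single jj 1) j0 := by
          rw [map_sum]
          simp only [_root_.map_smul]
      _ = Nᵀ.cramer a j0 := by rw [ha]
  have hrowdot : ∀ j j0 : Fin n, N j ⬝ᵥ dvec j0 = if j = j0 then N.det else 0 := by
    intro j j0
    rw [hdot, Matrix.cramer_transpose_row_self]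
    rcases eq_or_ne j j0 with h | h
    · subst h
      simp
    · simp [Pi.single_apply, h, h.symm]
  have hAbound : ∀ (i : Fin m) (j0 : Fin n), (A i ⬝ᵥ dvec j0).natAbs ≤ Δ := by
    intro i j0
    rw [hdot, Matrix.cramer_apply, Matrix.updateCol_transpose, Matrix.det_transpose]
    have h1 : N.updateRow j0 (A i) = A.submatrix (Function.update (fun j => g (e j)) j0 i) id := by
      ext j jj
      by_cases h : j = j0 <;>
        simp [Matrix.updateRow_apply, Function.update, h, hNdef]
    rw [h1, ← hΔ, maxAbsSubdet]
    exact Finset.le_sup (f := fun f : Fin n → Fin m => ((A.submatrix f id).det).natAbs)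
      (Finset.mem_univ _)
  -- small-slack rows are orthogonal to the Cramer directions outside s
  have hzero : ∀ i ∈ Sc, ∀ j0 : Fin n, ((e j0 : Fin n → ℝ)) ∉ s → A i ⬝ᵥ dvec j0 = 0 := by
    intro i hi j0 hj0
    set dR : Fin n → ℝ := fun jj => ((dvec j0 jj : ℤ) : ℝ) with hdRdef
    let ℓ : (Fin n → ℝ) →ₗ[ℝ] ℝ :=
      { toFun := fun w => w ⬝ᵥ dR
        map_add' := fun u w => add_dotProduct _ _ _
        map_smul' := fun c w => by
          simp only [RingHom.id_apply, smul_eq_mul]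
          exact smul_dotProduct c w _ }
    have hspanle : Submodule.span ℝ s ≤ LinearMap.ker ℓ := by
      rw [Submodule.span_le]
      intro w hw
      have hwbs : w ∈ bs := hsbs hw
      set j' := e.symm ⟨w, hwbs⟩ with hj'def
      have hw' : ((e j' : Fin n → ℝ)) = w := by
        rw [hj'def, Equiv.apply_symm_apply]
      have hj' : j' ≠ j0 := by
        intro h
        rw [h] at hw'
        exact hj0 (hw' ▸ hw)
      have hℓw : ℓ w = ((N j' ⬝ᵥ dvec j0 : ℤ) : ℝ) := by
        rw [castDot, ← hw', ← hNrow j']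
        rfl
      have : ℓ w = 0 := by
        rw [hℓw, hrowdot]
        simp [hj']
      simpa [SetLike.mem_coe, LinearMap.mem_ker] using this
    have hmem : AR i ∈ Submodule.span ℝ s := by
      rw [hspan_st]
      exact Submodule.subset_span ⟨i, by exact_mod_cast hi, rfl⟩
    have h0 : ℓ (AR i) = 0 := hspanle hmem
    have h1 : ℓ (AR i) = ((A i ⬝ᵥ dvec j0 : ℤ) : ℝ) := by
      rw [castDot]
      rfl
    rw [h1] at h0
    exact_mod_cast h0
  -- the perturbed points lie in the polyhedron
  have hPstep : ∀ j0 : Fin n, ((e j0 : Fin n → ℝ)) ∉ s → ∀ ε : ℤ, ε = 1 ∨ ε = -1 →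
      (fun jj => ((x jj + ε * dvec j0 jj : ℤ) : ℝ)) ∈ poly A b ∩ intPts := by
    intro j0 hj0 ε hε
    constructor
    · intro i
      have key : A.mulVec (fun jj => x jj + ε * dvec j0 jj) i ≤ b i := by
        have h1 : A.mulVec (fun jj => x jj + ε * dvec j0 jj) i
            = A.mulVec x i + ε * (A i ⬝ᵥ dvec j0) := by
          simp only [Matrix.mulVec, dotProduct, Finset.mul_sum]
          rw [← Finset.sum_add_distrib]
          congr 1
          funext jj
          ring
        by_cases hi : (Δ : ℤ) ≤ b i - A.mulVec x i
        · have habs : |A i ⬝ᵥ dvec j0| ≤ (Δ : ℤ) := by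
            have h2 := hAbound i j0
            rw [Int.abs_eq_natAbs]
            exact_mod_cast h2
          have h3 := abs_le.mp habs
          rcases hε with rfl | rfl
          · rw [h1]; omega
          · rw [h1]; omega
        · have hi' : i ∈ Sc := by
            rw [hScdef]
            exact Finset.mem_filter.mpr ⟨Finset.mem_univ _, hi⟩
          rw [h1, hzero i hi' j0 hj0]
          simpa using hxP i
      have hc := castMulVec A (fun jj => x jj + ε * dvec j0 jj) i
      rw [hc]
      exact_mod_cast key
    · intro jj
      exact ⟨_, rfl⟩
  -- the Cramer directions lie in the direction of the face
  have hdir : ∀ j0 : Fin n, ((e j0 : Fin n → ℝ)) ∉ s →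
      (fun jj => ((dvec j0 jj : ℤ) : ℝ)) ∈ (affineSpan ℝ F).direction := by
    intro j0 hj0
    set p : Fin n → ℝ := fun jj => ((x jj + 1 * dvec j0 jj : ℤ) : ℝ) with hpdef
    set q : Fin n → ℝ := fun jj => ((x jj + (-1) * dvec j0 jj : ℤ) : ℝ) with hqdef
    have hp : p ∈ intHull A b :=
      subset_convexHull ℝ _ (hPstep j0 hj0 1 (Or.inl rfl))
    have hq : q ∈ intHull A b :=
      subset_convexHull ℝ _ (hPstep j0 hj0 (-1) (Or.inr rfl))
    have hseg : (fun j => (x j : ℝ)) ∈ openSegment ℝ p q := by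
      refine ⟨1/2, 1/2, by norm_num, by norm_num, by norm_num, ?_⟩
      funext j
      simp only [hpdef, hqdef, Pi.add_apply, Pi.smul_apply, smul_eq_mul]
      push_cast
      ring
    have hpF := hF.2 hp hq hxF hseg
    have hd : (fun jj => ((dvec j0 jj : ℤ) : ℝ)) = p - (fun j => (x j : ℝ)) := by
      funext j
      simp only [hpdef, Pi.sub_apply]
      push_cast
      ring
    rw [hd]
    exact AffineSubspace.vsub_mem_direction (subset_affineSpan ℝ F hpF)
      (subset_affineSpan ℝ F hxF)
  -- the set of usable indices is large
  haveI : Fintype s := hsfin.fintype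
  have hJsplit := Finset.card_filter_add_card_filter_not
    (s := (Finset.univ : Finset (Fin n))) (p := fun j : Fin n => ((e j : Fin n → ℝ)) ∉ s)
  rw [Finset.card_univ, Fintype.card_fin] at hJsplit
  set J := Finset.univ.filter (fun j : Fin n => ((e j : Fin n → ℝ)) ∉ s) with hJdef
  have hJc : (Finset.univ.filter (fun j : Fin n => ¬ ((e j : Fin n → ℝ)) ∉ s)).card ≤ Sc.card := by
    have h1 : (Finset.univ.filter (fun j : Fin n => ¬ ((e j : Fin n → ℝ)) ∉ s)).card
        ≤ s.toFinset.card := by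
      apply Finset.card_le_card_of_injOn (fun j => ((e j : Fin n → ℝ)))
      · intro j hj
        rw [Finset.mem_coe, Finset.mem_filter, not_not] at hj
        exact Set.mem_toFinset.mpr hj.2
      · intro j1 _ j2 _ h
        exact e.injective (Subtype.val_injective h)
    refine h1.trans ?_
    rw [← Set.ncard_eq_toFinset_card' s]
    exact hsncard
  have hJcard : k + 1 ≤ J.card := by omega
  -- linear independence of the chosen Cramer directions
  have hfam : LinearIndependent ℝ (fun j : J => (fun jj => ((dvec (j : Fin n) jj : ℤ) : ℝ))) := by
    apply LinearIndependent.of_comp (matR N).mulVecLin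
    have hcomp : ((matR N).mulVecLin ∘ fun j : J => (fun jj => ((dvec (j : Fin n) jj : ℤ) : ℝ)))
        = fun j : J => ((N.det : ℝ) • (Pi.single (j : Fin n) (1 : ℝ) : Fin n → ℝ)) := by
      funext j
      funext j'
      have h1 : ((matR N).mulVecLin (fun jj => ((dvec (j : Fin n) jj : ℤ) : ℝ))) j'
          = ((N j' ⬝ᵥ dvec (j : Fin n) : ℤ) : ℝ) := by
        rw [castDot]
        rfl
      simp only [Function.comp_apply, h1, hrowdot, Pi.smul_apply, Pi.single_apply, smul_eq_mul]
      rcases eq_or_ne j' (j : Fin n) with h | h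
      · simp [h]
      · simp [h, h.symm]
    rw [hcomp]
    have h1 : LinearIndependent ℝ (fun j : Fin n => Pi.single j (1 : ℝ)) := by
      have h2 := (Pi.basisFun ℝ (Fin n)).linearIndependent
      have h3 : ((Pi.basisFun ℝ (Fin n)) : Fin n → Fin n → ℝ)
          = fun j : Fin n => Pi.single j (1 : ℝ) := by
        funext j
        exact Pi.basisFun_apply ℝ (Fin n) j
      rwa [h3] at h2
    have h2 : LinearIndependent ℝ (fun j : J => (Pi.single (j : Fin n) (1 : ℝ) : Fin n → ℝ)) :=
      h1.comp (fun j : J => (j : Fin n)) Subtype.val_injective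
    have hu : IsUnit ((N.det : ℤ) : ℝ) := by
      rw [isUnit_iff_ne_zero]
      exact_mod_cast hdet
    obtain ⟨u, hu⟩ := hu
    have h4 := h2.units_smul (fun _ => u)
    have h5 : ((fun _ : J => u) • fun j : J => (Pi.single (j : Fin n) (1 : ℝ) : Fin n → ℝ))
        = fun j : J => ((N.det : ℝ) • (Pi.single (j : Fin n) (1 : ℝ) : Fin n → ℝ)) := by
      funext j
      rw [Pi.smul_apply', ← hu, Units.smul_def]
    rwa [h5] at h4
  -- conclude via dimension count
  have hspanle2 : Submodule.span ℝ
      (Set.range (fun j : J => (fun jj => ((dvec (j : Fin n) jj : ℤ) : ℝ))))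
      ≤ (affineSpan ℝ F).direction := by
    rw [Submodule.span_le]
    rintro _ ⟨j, rfl⟩
    exact hdir (j : Fin n) (Finset.mem_filter.mp j.2).2
  have hfr := finrank_span_eq_card hfam
  have hle := Submodule.finrank_mono hspanle2
  have hJk : J.card ≤ k := by
    calc J.card = Fintype.card J := (Fintype.card_coe J).symm
      _ = Module.finrank ℝ (Submodule.span ℝ
            (Set.range (fun j : J => (fun jj => ((dvec (j : Fin n) jj : ℤ) : ℝ))))) := hfr.symm
      _ ≤ Module.finrank ℝ (affineSpan ℝ F).direction := hle
      _ = k := hFdim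
  omega
end

section
/- The number of vertices of the integer hull P_I = conv(P ∩ Z^n) satisfies |vertex(P_I)| ≤ β_Δ(P) · γ(n, Δ). -/
open Matrix Set

/-- A `Δ`-deep base of the system `A x ≤ b`. -/
def DeepBase {m n : ℕ} (A : Matrix (Fin m) (Fin n) ℤ) (b : Fin m → ℤ) (Δ : ℕ)
    (B : Finset (Fin m)) : Prop :=
  ∃ h : B.card = n,
    (A.submatrix (fun j : Fin n => ((B.orderIsoOfFin h j : {x // x ∈ B}) : Fin m)) id).det ≠ 0 ∧
    ∃ x : Fin n → ℝ,
      (∀ i ∈ B, (b i : ℝ) - ((Δ : ℝ) - 1) ≤ (matR A).mulVec x i) ∧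
      (∀ i : Fin m, (matR A).mulVec x i ≤ (b i : ℝ))

/-- A set is convex-independent if none of its points lies in the convex hull of the others. -/
def ConvexIndependentSet {n : ℕ} (M : Set (Fin n → ℝ)) : Prop :=
  ∀ x ∈ M, x ∉ convexHull ℝ (M \ {x})

/-- The grid `{0, 1, …, Δ-1}ⁿ` inside `ℝⁿ`. -/
def grid (n Δ : ℕ) : Set (Fin n → ℝ) := {x | ∀ j, ∃ z : ℕ, z < Δ ∧ x j = (z : ℝ)}

/-- `γ(n, Δ)`: the maximum cardinality of a convex-independent subset of `{0,…,Δ-1}ⁿ`. -/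
noncomputable def gamma (n Δ : ℕ) : ℕ :=
  sSup {c : ℕ | ∃ M : Finset (Fin n → ℝ), M.card = c ∧
    (M : Set (Fin n → ℝ)) ⊆ grid n Δ ∧ ConvexIndependentSet (M : Set (Fin n → ℝ))}

namespace IHullAux

variable {m n : ℕ}

lemma det_matR {k : ℕ} (M : Matrix (Fin k) (Fin k) ℤ) : (matR M).det = (M.det : ℝ) := by
  simpa [matR] using ((Int.castRingHom ℝ).map_det M).symm

lemma matR_submatrix (A : Matrix (Fin m) (Fin n) ℤ) (f : Fin n → Fin m) :
    (matR A).submatrix f id = matR (A.submatrix f id) := rfl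

/-- canonical basis vector -/
def eB {k : ℕ} {R : Type*} [Semiring R] [DecidableEq (Fin k)] (i : Fin k) : Fin k → R :=
  fun j => if i = j then 1 else 0

lemma matR_updateRow {k : ℕ} (M : Matrix (Fin k) (Fin k) ℤ) (i : Fin k) (r : Fin k → ℤ) :
    matR (M.updateRow i r) = (matR M).updateRow i (fun j => (r j : ℝ)) := by
  simpa [matR, Function.comp_def] using Matrix.map_updateRow (M := M) (i := i) (b := r) (fun a : ℤ => (a : ℝ))

/-- the linear functional `a ↦ det (T with row i₀ replaced by a)` -/
noncomputable def rowDet {k : ℕ} (T : Matrix (Fin k) (Fin k) ℝ) (i₀ : Fin k) :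
    (Fin k → ℝ) →ₗ[ℝ] ℝ where
  toFun a := (T.updateRow i₀ a).det
  map_add' u v := Matrix.det_updateRow_add T i₀ u v
  map_smul' s u := by simpa using Matrix.det_updateRow_smul T i₀ s u

lemma rowDet_eq_sum {k : ℕ} (T : Matrix (Fin k) (Fin k) ℝ) (i₀ : Fin k) (a : Fin k → ℝ) :
    rowDet T i₀ a = ∑ j, a j * rowDet T i₀ (eB j) := by
  conv_lhs => rw [pi_eq_sum_univ a, map_sum]
  refine Finset.sum_congr rfl fun j _ => ?_
  rw [LinearMap.map_smul, smul_eq_mul]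
  rfl


lemma exists_kernel_vector {m n' : ℕ} (A : Matrix (Fin m) (Fin (n'+1)) ℤ) {Δ : ℕ}
    (hΔ : maxAbsSubdet A = Δ) (j₀ : Fin m) (g : Fin n' → Fin m)
    (hind : LinearIndependent ℝ (fun k => matR A (g k))) :
    ∃ z : Fin (n'+1) → ℤ, (fun j => (z j : ℝ)) ≠ 0 ∧
      (∀ w : Fin (n'+1) → ℝ, w ∈ Submodule.span ℝ (Set.range (fun k => matR A (g k))) →
        ∑ j, w j * (z j : ℝ) = 0) ∧
      (∀ i : Fin m, |∑ j, matR A i j * (z j : ℝ)| ≤ (Δ : ℝ)) := by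
  classical
  set Tz : Matrix (Fin (n'+1)) (Fin (n'+1)) ℤ := A.submatrix (Fin.cases j₀ g) id with hTz
  set TR : Matrix (Fin (n'+1)) (Fin (n'+1)) ℝ := matR Tz with hTR
  set z : Fin (n'+1) → ℤ := fun j => (Tz.updateRow 0 (eB j)).det with hz
  -- casting
  have hcast : ∀ j, (z j : ℝ) = rowDet TR 0 (eB j) := by
    intro j
    have hcomp : (fun j' => ((eB j j' : ℤ) : ℝ)) = (eB j : Fin (n'+1) → ℝ) := by
      funext j'
      simp [eB, apply_ite]
    have h1 : matR (Tz.updateRow 0 (eB j)) = TR.updateRow 0 (eB j) := by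
      rw [matR_updateRow, hcomp]
    have : rowDet TR 0 (eB j) = (matR (Tz.updateRow 0 (eB j))).det := by rw [h1]; rfl
    rw [this, det_matR]
  have hphi : ∀ w : Fin (n'+1) → ℝ, rowDet TR 0 w = ∑ j, w j * (z j : ℝ) := by
    intro w
    rw [rowDet_eq_sum]
    exact Finset.sum_congr rfl fun j _ => by rw [hcast]
  -- rows of TR
  have hrow : ∀ k : Fin n', TR k.succ = matR A (g k) := by
    intro k
    funext j'
    simp [hTR, hTz, matR, Fin.cases_succ]
  -- vanishing on the span
  have hvanish : ∀ w ∈ Submodule.span ℝ (Set.range (fun k => matR A (g k))),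
      rowDet TR 0 w = 0 := by
    intro w hw
    have hker : Submodule.span ℝ (Set.range (fun k => matR A (g k))) ≤
        LinearMap.ker (rowDet TR 0) := by
      rw [Submodule.span_le]
      rintro _ ⟨k, rfl⟩
      have : rowDet TR 0 (matR A (g k)) = (TR.updateRow 0 (TR k.succ)).det := by
        rw [hrow]; rfl
      simp only [SetLike.mem_coe, LinearMap.mem_ker, this]
      exact Matrix.det_updateRow_eq_zero (Fin.succ_ne_zero k)
    exact LinearMap.mem_ker.mp (hker hw)
  -- bound
  have hbound : ∀ i : Fin m, |rowDet TR 0 (matR A i)| ≤ (Δ : ℝ) := by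
    intro i
    have h2 : Tz.updateRow 0 (A i) = A.submatrix (Fin.cases i g) id := by
      funext l j'
      refine Fin.cases ?_ ?_ l
      · simp
      · intro k
        simp [hTz, Matrix.updateRow_ne (Fin.succ_ne_zero k)]
    have h1 : TR.updateRow 0 (matR A i) = matR (Tz.updateRow 0 (A i)) := by
      rw [matR_updateRow]
      rfl
    have hval : rowDet TR 0 (matR A i) = ((A.submatrix (Fin.cases i g) id).det : ℝ) := by
      show (TR.updateRow 0 (matR A i)).det = _
      rw [h1, h2, det_matR]
    rw [hval]
    have hd : ((A.submatrix (Fin.cases i g) id).det).natAbs ≤ maxAbsSubdet A :=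
      Finset.le_sup (f := fun f : Fin (n'+1) → Fin m => ((A.submatrix f id).det).natAbs)
        (Finset.mem_univ (Fin.cases i g : Fin (n'+1) → Fin m))
    rw [hΔ] at hd
    rw [← Int.cast_abs]
    have : |(A.submatrix (Fin.cases i g) id).det| ≤ (Δ : ℤ) := by
      rw [Int.abs_eq_natAbs]; exact_mod_cast hd
    exact_mod_cast this
  -- nonvanishing
  have hspan_ne : Submodule.span ℝ (Set.range (fun k => matR A (g k))) ≠ ⊤ := by
    intro h
    have h1 : Module.finrank ℝ (Submodule.span ℝ (Set.range (fun k => matR A (g k)))) = n' := by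
      rw [finrank_span_eq_card hind]
      simp
    rw [h, finrank_top] at h1
    rw [Module.finrank_fin_fun] at h1
    omega
  obtain ⟨u, hu⟩ : ∃ u, u ∉ Submodule.span ℝ (Set.range (fun k => matR A (g k))) := by
    by_contra h
    push_neg at h
    exact hspan_ne (Submodule.eq_top_iff'.mpr h)
  have hmat : TR.updateRow 0 u = Matrix.of (Fin.cons u (fun k => matR A (g k))) := by
    funext l j'
    refine Fin.cases ?_ ?_ l
    · simp
    · intro k
      rw [Matrix.updateRow_ne (Fin.succ_ne_zero k)]
      show TR k.succ j' = _
      rw [hrow k]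
      simp [Fin.cons_succ]
  have hindep2 : LinearIndependent ℝ (fun l => (TR.updateRow 0 u) l) := by
    rw [hmat]
    have : LinearIndependent ℝ (Fin.cons u (fun k => matR A (g k)) : Fin (n'+1) → (Fin (n'+1) → ℝ)) :=
      linearIndependent_fin_cons.mpr ⟨hind, hu⟩
    exact this
  have hdet_ne : rowDet TR 0 u ≠ 0 := by
    have hunit : IsUnit (TR.updateRow 0 u) := Matrix.linearIndependent_rows_iff_isUnit.mp hindep2
    have : IsUnit (TR.updateRow 0 u).det := (Matrix.isUnit_iff_isUnit_det _).mp hunit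
    exact isUnit_iff_ne_zero.mp this
  refine ⟨z, ?_, fun w hw => by rw [← hphi]; exact hvanish w hw, fun i => by rw [← hphi]; exact hbound i⟩
  intro h0
  apply hdet_ne
  rw [hphi]
  have hz0 : ∀ j, (z j : ℝ) = 0 := fun j => congrFun h0 j
  simp [hz0]


lemma exists_base_subset_of_span {m n : ℕ} (A : Matrix (Fin m) (Fin n) ℤ) (Jset : Set (Fin m))
    (hspan : Submodule.span ℝ ((fun i => matR A i) '' Jset) = ⊤) :
    ∃ B : Finset (Fin m), ∃ hB : B.card = n, (↑B ⊆ Jset) ∧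
      (A.submatrix (fun j : Fin n => ((B.orderIsoOfFin hB j : {x // x ∈ B}) : Fin m)) id).det ≠ 0 := by
  classical
  obtain ⟨t, htsub, htspan, htind⟩ := exists_linearIndependent ℝ ((fun i => matR A i) '' Jset)
  rw [hspan] at htspan
  have htfin : t.Finite := htind.setFinite
  haveI : Fintype t := htfin.fintype
  have hcardt : Fintype.card t = n := by
    have h1 : Module.finrank ℝ (Submodule.span ℝ t) = t.toFinset.card :=
      finrank_span_set_eq_card htind
    rw [htspan, finrank_top, Module.finrank_fin_fun] at h1
    rw [Set.toFinset_card] at h1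
    omega
  -- choose indices
  have hsel : ∀ w : t, ∃ i : Fin m, i ∈ Jset ∧ matR A i = (w : Fin n → ℝ) := by
    rintro ⟨w, hw⟩
    obtain ⟨i, hi, hiw⟩ := htsub hw
    exact ⟨i, hi, hiw⟩
  choose idx hidxJ hidxval using hsel
  have hidxinj : Function.Injective idx := by
    intro w w' h
    have : (w : Fin n → ℝ) = (w' : Fin n → ℝ) := by rw [← hidxval w, ← hidxval w', h]
    exact Subtype.ext this
  set B : Finset (Fin m) := Finset.image idx Finset.univ with hBdef
  have hB : B.card = n := by
    rw [hBdef, Finset.card_image_of_injective _ hidxinj, Finset.card_univ, hcardt]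
  refine ⟨B, hB, ?_, ?_⟩
  · intro i hi
    simp only [hBdef, Finset.coe_image, Set.mem_image] at hi
    obtain ⟨w, _, rfl⟩ := hi
    exact hidxJ w
  · set e : Fin n → Fin m := fun j => ((B.orderIsoOfFin hB j : {x // x ∈ B}) : Fin m) with he
    have hmem : ∀ j, ∃ w : t, idx w = e j := by
      intro j
      have : e j ∈ B := (B.orderIsoOfFin hB j).2
      simpa [hBdef] using this
    have hrow_mem : ∀ j, matR A (e j) ∈ t := by
      intro j
      obtain ⟨w, hw⟩ := hmem j
      rw [← hw, hidxval w]
      exact w.2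
    set σ : Fin n → t := fun j => ⟨matR A (e j), hrow_mem j⟩ with hσ
    have heidx : ∀ j, idx (σ j) = e j := by
      intro j
      obtain ⟨w, hw⟩ := hmem j
      have : w = σ j := Subtype.ext (by rw [hσ]; simp only [← hw, hidxval w])
      rw [← this, hw]
    have hσinj : Function.Injective σ := by
      intro j j' h
      have h1 : e j = e j' := by rw [← heidx j, ← heidx j', h]
      have heinj : Function.Injective e := by
        intro a a' ha
        have := (B.orderIsoOfFin hB).injective (Subtype.ext ha)
        exact this
      exact heinj h1
    have hρ : LinearIndependent ℝ (fun j => matR A (e j)) := by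
      have : (fun j => matR A (e j)) = (fun w : t => (w : Fin n → ℝ)) ∘ σ := by
        funext j; rfl
      rw [this]
      exact htind.comp σ hσinj
    have hrows : (fun j => ((matR A).submatrix e id) j) = fun j => matR A (e j) := rfl
    have hunit : IsUnit ((matR A).submatrix e id) := by
      rw [← Matrix.linearIndependent_rows_iff_isUnit]
      show LinearIndependent ℝ (fun j => matR A (e j))
      exact hρ
    have hdetR : ((matR A).submatrix e id).det ≠ 0 :=
      isUnit_iff_ne_zero.mp ((Matrix.isUnit_iff_isUnit_det _).mp hunit)
    rw [matR_submatrix, det_matR] at hdetR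
    exact_mod_cast hdetR


lemma exists_deep_base_at {m n : ℕ} (A : Matrix (Fin m) (Fin n) ℤ) (b : Fin m → ℤ) (Δ : ℕ)
    (hΔ : maxAbsSubdet A = Δ) (hrank : (matR A).rank = n)
    (v : Fin n → ℝ) (hv : v ∈ Set.extremePoints ℝ (intHull A b)) :
    ∃ B : Finset (Fin m), DeepBase A b Δ B ∧
      ∀ i ∈ B, (b i : ℝ) - ((Δ : ℝ) - 1) ≤ (matR A).mulVec v i := by
  classical
  have hvP : v ∈ poly A b ∩ intPts := extremePoints_convexHull_subset hv
  set Jset : Set (Fin m) := {i | (b i : ℝ) - ((Δ : ℝ) - 1) ≤ (matR A).mulVec v i} with hJdef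
  by_cases hspan : Submodule.span ℝ ((fun i => matR A i) '' Jset) = ⊤
  · obtain ⟨B, hB, hBJ, hdet⟩ := exists_base_subset_of_span A Jset hspan
    exact ⟨B, ⟨hB, hdet, v, fun i hi => hBJ (Finset.mem_coe.mpr hi), fun i => hvP.1 i⟩,
      fun i hi => hBJ (Finset.mem_coe.mpr hi)⟩
  · exfalso
    -- `n ≠ 0`
    have hn0 : n ≠ 0 := by
      rintro rfl
      apply hspan
      rw [Submodule.eq_top_iff']
      intro x
      have hx : x = 0 := funext fun j => j.elim0
      rw [hx]
      exact Submodule.zero_mem _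
    obtain ⟨n', rfl⟩ : ∃ n', n = n' + 1 := ⟨n - 1, by omega⟩
    -- `m ≥ 1`
    have hm : 0 < m := by
      have h1 := Matrix.rank_le_card_height (matR A)
      rw [hrank, Fintype.card_fin] at h1
      omega
    set j₀ : Fin m := ⟨0, hm⟩ with hj₀
    -- all rows span everything
    have hall : Submodule.span ℝ (Set.range (fun i => matR A i)) = ⊤ := by
      apply Submodule.eq_top_of_finrank_eq
      have h1 := Matrix.rank_eq_finrank_span_row (matR A)
      rw [hrank] at h1
      rw [Module.finrank_fin_fun]; exact h1.symm
    -- a basis of the span of the rows in `Jset`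
    obtain ⟨t₀, ht₀sub, ht₀span, ht₀ind⟩ :=
      exists_linearIndependent ℝ ((fun i => matR A i) '' Jset)
    have himgsub : ((fun i => matR A i) '' Jset) ⊆ Set.range (fun i => matR A i) := by
      rintro _ ⟨i, _, rfl⟩
      exact ⟨i, rfl⟩
    -- extend it to a basis of everything using rows of `A`
    obtain ⟨bset, hbsub, ht₀b, hbspan, hbind⟩ :=
      exists_linearIndepOn_id_extension ht₀ind (ht₀sub.trans himgsub)
    replace hbind : LinearIndependent ℝ ((↑) : bset → (Fin (n' + 1) → ℝ)) := hbind
    have hbtop : Submodule.span ℝ bset = ⊤ := by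
      rw [eq_top_iff, ← hall]
      exact Submodule.span_le.mpr hbspan
    have hbfin : bset.Finite := hbind.setFinite
    haveI : Fintype bset := hbfin.fintype
    have ht₀fin : t₀.Finite := ht₀ind.setFinite
    haveI : Fintype t₀ := ht₀fin.fintype
    have hbcard : bset.toFinset.card = n' + 1 := by
      have h1 : Module.finrank ℝ (Submodule.span ℝ bset) = bset.toFinset.card :=
        finrank_span_set_eq_card hbind
      rw [hbtop, finrank_top, Module.finrank_fin_fun] at h1
      omega
    have ht₀card : t₀.toFinset.card < n' + 1 := by
      have h1 : Module.finrank ℝ (Submodule.span ℝ t₀) = t₀.toFinset.card :=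
        finrank_span_set_eq_card ht₀ind
      have h2 : Submodule.span ℝ t₀ < ⊤ := lt_top_iff_ne_top.mpr (by rw [ht₀span]; exact hspan)
      have h3 := Submodule.finrank_lt (K := ℝ) (V := Fin (n' + 1) → ℝ) h2.ne
      rw [h1, Module.finrank_fin_fun] at h3
      exact h3
    -- drop one vector of `bset` not in `t₀`
    have hne : ¬ bset ⊆ t₀ := by
      intro hsub
      have : bset.toFinset ⊆ t₀.toFinset := by
        intro x hx
        rw [Set.mem_toFinset] at hx ⊢
        exact hsub hx
      have := Finset.card_le_card this
      omega
    obtain ⟨w, hwb, hwt⟩ := Set.not_subset.mp hne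
    set t' : Set (Fin (n' + 1) → ℝ) := bset \ {w} with ht'def
    have ht'ind : LinearIndependent ℝ ((↑) : t' → (Fin (n' + 1) → ℝ)) :=
      (show LinearIndepOn ℝ id bset from hbind).mono Set.diff_subset
    have ht't₀ : t₀ ⊆ t' := by
      intro x hx
      exact ⟨ht₀b hx, by rintro rfl; exact hwt hx⟩
    have ht'fin : t'.Finite := hbfin.subset Set.diff_subset
    haveI : Fintype t' := ht'fin.fintype
    have ht'card : t'.toFinset.card = n' := by
      have h1 : t'.toFinset = bset.toFinset \ {w} := by
        ext x
        simp [ht'def, Set.mem_toFinset]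
      rw [h1, Finset.card_sdiff_of_subset (by simp [Set.mem_toFinset, hwb]), hbcard]
      simp
    -- enumerate `t'`
    set eqv : t'.toFinset ≃ Fin n' := t'.toFinset.equivFinOfCardEq ht'card with heqv
    set r : Fin n' → (Fin (n' + 1) → ℝ) := fun k => ((eqv.symm k : t'.toFinset) : Fin (n' + 1) → ℝ)
      with hrdef
    have hrmem : ∀ k, r k ∈ t' := fun k => Set.mem_toFinset.mp (eqv.symm k).2
    -- choose row indices
    have hsel : ∀ k, ∃ i : Fin m, matR A i = r k := by
      intro k
      obtain ⟨i, hi⟩ := hbsub (hrmem k).1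
      exact ⟨i, hi⟩
    choose g hg using hsel
    have hind : LinearIndependent ℝ (fun k => matR A (g k)) := by
      have h1 : (fun k => matR A (g k)) = fun k => r k := funext hg
      rw [h1]
      set τ : Fin n' → t' := fun k => ⟨r k, hrmem k⟩ with hτ
      have hτinj : Function.Injective τ := by
        intro k k' h
        have hval : (τ k).1 = (τ k').1 := congrArg Subtype.val h
        have h2 : (eqv.symm k : { x // x ∈ t'.toFinset }) = eqv.symm k' := Subtype.ext hval
        exact eqv.symm.injective h2
      exact ht'ind.comp τ hτinj
    -- the kernel vector
    obtain ⟨z, hz0, hzvan, hzbound⟩ := exists_kernel_vector A hΔ j₀ g hind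
    -- rows indexed by Jset pair to zero with z
    have hJvan : ∀ i ∈ Jset, ∑ j, matR A i j * (z j : ℝ) = 0 := by
      intro i hi
      apply hzvan
      have hrange : Set.range (fun k => matR A (g k)) = t' := by
        ext x
        constructor
        · rintro ⟨k, rfl⟩
          show matR A (g k) ∈ t'
          rw [hg k]
          exact hrmem k
        · intro hx
          refine ⟨eqv ⟨x, Set.mem_toFinset.mpr hx⟩, ?_⟩
          show matR A (g _) = x
          rw [hg]
          simp [hrdef]
      rw [hrange]
      have h1 : matR A i ∈ Submodule.span ℝ t₀ := by
        rw [ht₀span]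
        exact Submodule.subset_span ⟨i, hi, rfl⟩
      exact Submodule.span_mono ht't₀ h1
    -- dot products are `mulVec`
    have hmv : ∀ (x : Fin (n' + 1) → ℝ) (i : Fin m),
        (matR A).mulVec x i = ∑ j, matR A i j * x j := by
      intro x i
      rfl
    -- v has integer coordinates
    choose vz hvz using hvP.2
    set zR : Fin (n' + 1) → ℝ := fun j => (z j : ℝ) with hzR
    -- the two perturbed points
    have hmem : ∀ (s : ℝ), s = 1 ∨ s = -1 → (fun j => v j + s * zR j) ∈ poly A b ∩ intPts := by
      intro s hs
      constructor
      · intro i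
        have hsplit : (matR A).mulVec (fun j => v j + s * zR j) i
            = (matR A).mulVec v i + s * ∑ j, matR A i j * zR j := by
          rw [hmv, hmv]
          rw [Finset.mul_sum]
          rw [← Finset.sum_add_distrib]
          congr 1
          funext j
          ring
        by_cases hi : i ∈ Jset
        · rw [hsplit, hJvan i hi]
          simpa using hvP.1 i
        · -- deep constraint: integer gap of at least Δ
          have hlt : (matR A).mulVec v i < (b i : ℝ) - (Δ : ℝ) + 1 := by
            have := hi
            rw [hJdef] at this
            simp only [Set.mem_setOf_eq, not_le] at this
            linarith
          have hcast : (matR A).mulVec v i = ((A.mulVec vz i : ℤ) : ℝ) := by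
            have h5 : ((A.mulVec vz i : ℤ) : ℝ) = ∑ j, (A i j : ℝ) * (vz j : ℝ) := by
              simp only [Matrix.mulVec, dotProduct]
              push_cast
              rfl
            rw [hmv, h5]
            exact Finset.sum_congr rfl fun j _ => by rw [hvz j]; rfl
          have hint : (A.mulVec vz i : ℝ) ≤ (b i : ℝ) - (Δ : ℝ) := by
            have h2 : ((A.mulVec vz i : ℤ) : ℝ) < ((b i - Δ + 1 : ℤ) : ℝ) := by
              push_cast
              rw [← hcast]
              linarith
            have h3 : A.mulVec vz i < b i - Δ + 1 := by exact_mod_cast h2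
            have h4 : A.mulVec vz i ≤ b i - Δ := by omega
            exact_mod_cast h4
          have habs : |∑ j, matR A i j * zR j| ≤ (Δ : ℝ) := hzbound i
          have hsb : s * ∑ j, matR A i j * zR j ≤ (Δ : ℝ) := by
            rcases hs with rfl | rfl
            · rw [one_mul]; exact le_trans (le_abs_self _) habs
            · rw [neg_one_mul]; exact le_trans (neg_le_abs _) habs
          rw [hsplit, hcast]
          linarith
      · intro j
        refine ⟨vz j + (if s = 1 then z j else -z j), ?_⟩
        rcases hs with rfl | rfl
        · simp [hzR, hvz j]
        · norm_num [hzR, hvz j]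
    have hy : (fun j => v j + 1 * zR j) ∈ intHull A b :=
      subset_convexHull ℝ _ (hmem 1 (Or.inl rfl))
    have hy' : (fun j => v j + (-1) * zR j) ∈ intHull A b :=
      subset_convexHull ℝ _ (hmem (-1) (Or.inr rfl))
    rw [mem_extremePoints] at hv
    have hseg : v ∈ openSegment ℝ (fun j => v j + 1 * zR j) (fun j => v j + (-1) * zR j) := by
      refine ⟨1/2, 1/2, by norm_num, by norm_num, by norm_num, ?_⟩
      funext j
      simp only [Pi.add_apply, Pi.smul_apply, smul_eq_mul]
      ring
    obtain ⟨h1, -⟩ := hv.2 _ hy _ hy' hseg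
    apply hz0
    funext j
    have := congrFun h1 j
    simp only [one_mul] at this
    have : zR j = 0 := by linarith [this]
    simpa [hzR] using this

end IHullAux

/-- The number of vertices of the integer hull satisfies
`|vertex(P_I)| ≤ β_Δ(P) · γ(n, Δ)`. -/
theorem card_vertices_le_beta_mul_gamma {m n : ℕ}
    (A : Matrix (Fin m) (Fin n) ℤ) (b : Fin m → ℤ) (Δ : ℕ)
    (hΔ : maxAbsSubdet A = Δ) (hΔ1 : 1 ≤ Δ)
    (hrank : (matR A).rank = n)
    (hfull : affineSpan ℝ (poly A b) = ⊤) :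
    (Set.extremePoints ℝ (intHull A b)).ncard ≤
      {B : Finset (Fin m) | DeepBase A b Δ B}.ncard * gamma n Δ := by
  classical
  set V := Set.extremePoints ℝ (intHull A b) with hVdef
  by_cases hVfin : V.Finite
  swap
  · rw [Set.Infinite.ncard (by simpa using hVfin)]
    exact Nat.zero_le _
  -- the grid is finite
  have hgridfin : (grid n Δ).Finite := by
    apply Set.Finite.subset
      (Set.finite_range (fun (f : Fin n → Fin Δ) => fun j => ((f j : ℕ) : ℝ)))
    intro x hx
    choose zf hzf1 hzf2 using hx
    exact ⟨fun j => ⟨zf j, hzf1 j⟩, by funext j; exact (hzf2 j).symm⟩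
  -- bounded gamma set
  have hBdd : BddAbove {c : ℕ | ∃ M : Finset (Fin n → ℝ), M.card = c ∧
      (M : Set (Fin n → ℝ)) ⊆ grid n Δ ∧ ConvexIndependentSet (M : Set (Fin n → ℝ))} := by
    refine ⟨(grid n Δ).ncard, ?_⟩
    rintro c ⟨M, rfl, hsub, -⟩
    have h1 : (↑M : Set (Fin n → ℝ)).ncard ≤ (grid n Δ).ncard :=
      Set.ncard_le_ncard hsub hgridfin
    simpa [Set.ncard_coe_finset] using h1
  -- selection of a deep base for each vertex
  set Q : (Fin n → ℝ) → Finset (Fin m) → Prop := fun v B => DeepBase A b Δ B ∧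
      ∀ i ∈ B, (b i : ℝ) - ((Δ : ℝ) - 1) ≤ (matR A).mulVec v i with hQdef
  set fsel : (Fin n → ℝ) → Finset (Fin m) := fun v =>
    if h : ∃ B, Q v B then h.choose else ∅ with hfsel
  have hfselQ : ∀ v ∈ V, Q v (fsel v) := by
    intro v hv
    have h : ∃ B, Q v B := by
      obtain ⟨B, h1, h2⟩ := IHullAux.exists_deep_base_at A b Δ hΔ hrank v hv
      exact ⟨B, h1, h2⟩
    simp only [hfsel, dif_pos h]
    exact h.choose_spec
  set VF : Finset (Fin n → ℝ) := hVfin.toFinset with hVF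
  have hVFmem : ∀ v, v ∈ VF ↔ v ∈ V := fun v => hVfin.mem_toFinset
  rw [Set.ncard_eq_toFinset_card V hVfin]
  -- fiber bound
  have hfib : ∀ B ∈ VF.image fsel, (VF.filter (fun v => fsel v = B)).card ≤ gamma n Δ := by
    intro B hB
    obtain ⟨v₀, hv₀, hv₀B⟩ := Finset.mem_image.mp hB
    have hQ₀ : Q v₀ B := hv₀B ▸ hfselQ v₀ ((hVFmem v₀).mp hv₀)
    obtain ⟨hBcard, hdet, -⟩ := hQ₀.1
    set e : Fin n → Fin m :=
      fun j => ((B.orderIsoOfFin hBcard j : {x // x ∈ B}) : Fin m) with hedef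
    set Msub : Matrix (Fin n) (Fin n) ℝ := (matR A).submatrix e id with hMsub
    have hdetR : Msub.det ≠ 0 := by
      rw [hMsub, IHullAux.matR_submatrix, IHullAux.det_matR]
      exact_mod_cast hdet
    have hMunit : IsUnit Msub := (Matrix.isUnit_iff_isUnit_det _).mpr (isUnit_iff_ne_zero.mpr hdetR)
    have hMinj : Function.Injective Msub.mulVec := Matrix.mulVec_injective_iff_isUnit.mpr hMunit
    set cB : Fin n → ℝ := fun j => (b (e j) : ℝ) with hcB
    set gB : (Fin n → ℝ) → (Fin n → ℝ) := fun x => cB - Msub.mulVec x with hgB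
    have hginj : Function.Injective gB := by
      intro x y hxy
      apply hMinj
      funext j
      have := congrFun hxy j
      simp only [hgB, Pi.sub_apply] at this
      linarith
    -- `gB` is affine
    set aff : (Fin n → ℝ) →ᵃ[ℝ] (Fin n → ℝ) :=
      { toFun := gB
        linear := -Msub.mulVecLin
        map_vadd' := by
          intro p u
          funext j
          simp only [hgB, Pi.sub_apply, Matrix.mulVecLin_apply]
          have : Msub.mulVec (u +ᵥ p) = Msub.mulVec u + Msub.mulVec p := by
            have : (u +ᵥ p) = u + p := rfl
            rw [this, Matrix.mulVec_add]
          rw [this]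
          simp only [Pi.neg_apply, Matrix.mulVecLin_apply, Pi.add_apply]
          show cB j - (Msub.mulVec u j + Msub.mulVec p j)
            = (-(Msub.mulVec u) + (cB - Msub.mulVec p)) j
          simp only [Pi.neg_apply, Pi.add_apply, Pi.sub_apply]
          ring } with haff
    set S : Finset (Fin n → ℝ) := VF.filter (fun v => fsel v = B) with hS
    have hSV : ∀ v ∈ S, v ∈ V ∧ Q v B := by
      intro v hv
      obtain ⟨h1, h2⟩ := Finset.mem_filter.mp hv
      exact ⟨(hVFmem v).mp h1, h2 ▸ hfselQ v ((hVFmem v).mp h1)⟩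
    set M : Finset (Fin n → ℝ) := S.image gB with hM
    have hcardM : M.card = S.card := Finset.card_image_of_injective S hginj
    -- membership in the grid
    have hMgrid : (M : Set (Fin n → ℝ)) ⊆ grid n Δ := by
      intro x hx
      obtain ⟨v, hvS, rfl⟩ := Finset.mem_coe.mp hx |> Finset.mem_image.mp
      obtain ⟨hvV, hvQ⟩ := hSV v hvS
      have hvP : v ∈ poly A b ∩ intPts := extremePoints_convexHull_subset hvV
      choose vz hvz using hvP.2
      intro j
      have hej : e j ∈ B := (B.orderIsoOfFin hBcard j).2
      have hstrip := hvQ.2 (e j) hej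
      have hle : (matR A).mulVec v (e j) ≤ (b (e j) : ℝ) := hvP.1 (e j)
      have hmveq : (matR A).mulVec v (e j) = ((A.mulVec vz (e j) : ℤ) : ℝ) := by
        have h5 : ((A.mulVec vz (e j) : ℤ) : ℝ) = ∑ l, (A (e j) l : ℝ) * (vz l : ℝ) := by
          simp only [Matrix.mulVec, dotProduct]
          push_cast
          rfl
        rw [h5]
        show ∑ l, matR A (e j) l * v l = _
        exact Finset.sum_congr rfl fun l _ => by rw [hvz l]; rfl
      set d : ℤ := b (e j) - A.mulVec vz (e j) with hd
      have hval : gB v j = (d : ℝ) := by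
        have h6 : gB v j = (b (e j) : ℝ) - (matR A).mulVec v (e j) := rfl
        rw [h6, hmveq, hd]
        push_cast
        ring
      have hdr : (d : ℝ) = (b (e j) : ℝ) - (matR A).mulVec v (e j) := by
        rw [hd]
        push_cast
        rw [← hmveq]
      have hd0 : 0 ≤ d := by
        have h7 : (0 : ℝ) ≤ (d : ℝ) := by rw [hdr]; linarith
        exact_mod_cast h7
      have hdΔ : d ≤ (Δ : ℤ) - 1 := by
        have h8 : (d : ℝ) ≤ (Δ : ℝ) - 1 := by rw [hdr]; linarith
        exact_mod_cast h8
      refine ⟨d.toNat, ?_, ?_⟩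
      · omega
      · rw [hval]
        congr 1
        omega
    -- convex independence
    have hMconv : ConvexIndependentSet (M : Set (Fin n → ℝ)) := by
      intro x hx hmem
      obtain ⟨v, hvS, rfl⟩ := Finset.mem_coe.mp hx |> Finset.mem_image.mp
      obtain ⟨hvV, -⟩ := hSV v hvS
      have hMcoe : (M : Set (Fin n → ℝ)) = gB '' (S : Set (Fin n → ℝ)) := Finset.coe_image
      have hdiff : (M : Set (Fin n → ℝ)) \ {gB v} = gB '' ((S : Set (Fin n → ℝ)) \ {v}) := by
        rw [hMcoe, Set.image_diff hginj, Set.image_singleton]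
      rw [hdiff] at hmem
      have haffeq : gB '' ((S : Set (Fin n → ℝ)) \ {v})
          = ⇑aff '' ((S : Set (Fin n → ℝ)) \ {v}) := rfl
      rw [haffeq, ← AffineMap.image_convexHull] at hmem
      obtain ⟨u, hu, huv⟩ := hmem
      have huveq : u = v := hginj huv
      rw [huveq] at hu
      -- `v` is in the convex hull of a set avoiding `v` inside the hull
      have hsub2 : (S : Set (Fin n → ℝ)) \ {v} ⊆ intHull A b \ {v} := by
        intro y hy
        exact ⟨extremePoints_subset ((hSV y hy.1).1), hy.2⟩
      have hconv : Convex ℝ (intHull A b) := convex_convexHull ℝ _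
      have hnot := (hconv.mem_extremePoints_iff_mem_diff_convexHull_diff.mp hvV).2
      exact hnot (convexHull_mono hsub2 hu)
    -- conclude via the sup
    have hmemset : M.card ∈ {c : ℕ | ∃ M : Finset (Fin n → ℝ), M.card = c ∧
        (M : Set (Fin n → ℝ)) ⊆ grid n Δ ∧ ConvexIndependentSet (M : Set (Fin n → ℝ))} :=
      ⟨M, rfl, hMgrid, hMconv⟩
    have : M.card ≤ gamma n Δ := le_csSup hBdd hmemset
    omega
  have hcount : VF.card ≤ gamma n Δ * (VF.image fsel).card :=
    Finset.card_le_mul_card_image VF (gamma n Δ) hfib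
  have hdeep_fin : {B : Finset (Fin m) | DeepBase A b Δ B}.Finite := Set.toFinite _
  have himgcard : (VF.image fsel).card ≤ {B : Finset (Fin m) | DeepBase A b Δ B}.ncard := by
    rw [Set.ncard_eq_toFinset_card _ hdeep_fin]
    apply Finset.card_le_card
    intro B hB
    obtain ⟨v, hvVF, rfl⟩ := Finset.mem_image.mp hB
    rw [Set.Finite.mem_toFinset]
    exact (hfselQ v ((hVFmem v).mp hvVF)).1
  calc VF.card ≤ gamma n Δ * (VF.image fsel).card := hcount
    _ ≤ gamma n Δ * {B : Finset (Fin m) | DeepBase A b Δ B}.ncard :=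
        Nat.mul_le_mul_left _ himgcard
    _ = {B : Finset (Fin m) | DeepBase A b Δ B}.ncard * gamma n Δ := Nat.mul_comm _ _
end

section
/- Let B ⊆ {1,…,m} be a set of indices with |B| = n and det(A_B) ≠ 0, and let V_B = {v ∈ vertex(P_I) : for every i ∈ B, 0 ≤ b_i − (A v)_i ≤ Δ − 1} be the set of vertices of the integer hull whose B-slacks are all smaller than Δ. Then |V_B| ≤ γ(n, Δ). -/
open Matrix Set

lemma grid_finite (n Δ : ℕ) : (grid n Δ).Finite := by
  have h : grid n Δ ⊆ Set.pi Set.univ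
      (fun _ : Fin n => (fun z : ℕ => (z : ℝ)) '' Set.Iio Δ) := by
    intro x hx j _
    obtain ⟨z, hz, hxz⟩ := hx j
    exact ⟨z, hz, hxz.symm⟩
  exact (Set.Finite.pi fun _ => (Set.finite_Iio Δ).image _).subset h


/-- For a set `B` of `n` row indices with `det(A_B) ≠ 0`, the set `V_B` of vertices of the
integer hull whose `B`-slacks are all at most `Δ - 1` has cardinality at most `γ(n, Δ)`. -/
theorem card_vertices_small_B_slacks_le_gamma {m n : ℕ}
    (A : Matrix (Fin m) (Fin n) ℤ) (b : Fin m → ℤ) (Δ : ℕ)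
    (hΔ : maxAbsSubdet A = Δ) (hΔ1 : 1 ≤ Δ)
    (hrank : (matR A).rank = n)
    (hfull : affineSpan ℝ (poly A b) = ⊤)
    (B : Finset (Fin m)) (hB : B.card = n)
    (hdet : (A.submatrix (fun j : Fin n => ((B.orderIsoOfFin hB j : {x // x ∈ B}) : Fin m))
      id).det ≠ 0) :
    {v ∈ Set.extremePoints ℝ (intHull A b) |
        ∀ i ∈ B, 0 ≤ (b i : ℝ) - (matR A).mulVec v i ∧
          (b i : ℝ) - (matR A).mulVec v i ≤ (Δ : ℝ) - 1}.ncard ≤ gamma n Δ := by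
  classical
  set f : Fin n → Fin m := fun j => ((B.orderIsoOfFin hB j : {x // x ∈ B}) : Fin m) with hf
  set M : Matrix (Fin n) (Fin n) ℝ := (matR A).submatrix f id with hM
  set c : Fin n → ℝ := fun j => (b (f j) : ℝ) with hc
  -- det of the real submatrix is nonzero
  have hdetR : M.det ≠ 0 := by
    have hMe : M = ((Int.castRingHom ℝ).mapMatrix (A.submatrix f id)) := by
      ext i j; simp [hM, matR]
    rw [hMe, ← RingHom.map_det, eq_intCast]
    exact_mod_cast hdet
  have hMunit : IsUnit M := (Matrix.isUnit_iff_isUnit_det M).2 (isUnit_iff_ne_zero.2 hdetR)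
  have hmulVecInj : Function.Injective (M.mulVec) :=
    Matrix.mulVec_injective_iff_isUnit.2 hMunit
  -- the affine slack map
  set φA : (Fin n → ℝ) →ᵃ[ℝ] (Fin n → ℝ) :=
    { toFun := fun v => c - M.mulVec v
      linear := -(M.mulVecLin)
      map_vadd' := by
        intro p v
        simp only [vadd_eq_add, Matrix.mulVec_add, LinearMap.neg_apply, Matrix.mulVecLin_apply]
        ext j; simp; ring } with hφA
  set φ : (Fin n → ℝ) → (Fin n → ℝ) := fun v => c - M.mulVec v with hφ
  have hφeq : ∀ v, φA v = φ v := fun _ => rfl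
  have hφinj : Function.Injective φ := by
    intro v w h
    apply hmulVecInj
    have h' : c - M.mulVec v = c - M.mulVec w := h
    exact sub_right_injective h'
  set V : Set (Fin n → ℝ) :=
    {v ∈ Set.extremePoints ℝ (intHull A b) |
        ∀ i ∈ B, 0 ≤ (b i : ℝ) - (matR A).mulVec v i ∧
          (b i : ℝ) - (matR A).mulVec v i ≤ (Δ : ℝ) - 1} with hV
  -- mulVec of M vs of matR A
  have hMv : ∀ v (j : Fin n), M.mulVec v j = (matR A).mulVec v (f j) := by
    intro v j; simp [hM, Matrix.mulVec, dotProduct]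
  -- V is convex independent
  have hVsub : V ⊆ Set.extremePoints ℝ (intHull A b) := fun v hv => hv.1
  have hVCI : ∀ v ∈ V, v ∉ convexHull ℝ (V \ {v}) := by
    intro v hv hmem
    have hext := (convex_convexHull ℝ _).convexIndependent_extremePoints
      (𝕜 := ℝ) (s := intHull A b)
    have hext' := convexIndependent_set_iff_notMem_convexHull_sdiff.1 hext
    exact hext' v (hVsub hv)
      (convexHull_mono (Set.diff_subset_diff_left hVsub) hmem)
  -- image is in the grid
  have himg_grid : φ '' V ⊆ grid n Δ := by
    rintro _ ⟨v, hv, rfl⟩ j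
    -- v is an integer point
    have hvint : v ∈ poly A b ∩ intPts :=
      extremePoints_convexHull_subset hv.1
    obtain ⟨z, hz⟩ : ∃ z : Fin n → ℤ, ∀ k, v k = (z k : ℝ) := by
      choose z hz using hvint.2
      exact ⟨z, hz⟩
    have hfjB : f j ∈ B := (B.orderIsoOfFin hB j).2
    obtain ⟨h0, h1⟩ := hv.2 (f j) hfjB
    have hAv : (matR A).mulVec v (f j) = ((A.mulVec z) (f j) : ℝ) := by
      simp only [matR, Matrix.mulVec, dotProduct, Matrix.map_apply]
      push_cast
      exact Finset.sum_congr rfl fun k _ => by rw [hz k]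
    set s : ℤ := b (f j) - (A.mulVec z) (f j) with hs
    have hslack : (b (f j) : ℝ) - (matR A).mulVec v (f j) = (s : ℝ) := by
      rw [hAv, hs]; push_cast; ring
    have hφv : φ v j = (s : ℝ) := by
      show c j - M.mulVec v j = (s : ℝ)
      rw [hMv]; exact hslack
    have hs0 : (0 : ℝ) ≤ (s : ℝ) := hslack ▸ h0
    have hs1 : (s : ℝ) ≤ (Δ : ℝ) - 1 := hslack ▸ h1
    refine ⟨s.toNat, ?_, ?_⟩
    · have h2 : (s : ℝ) < (Δ : ℝ) := by linarith
      have hsΔ : s < (Δ : ℤ) := by exact_mod_cast h2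
      omega
    · have hs0' : (0 : ℤ) ≤ s := by exact_mod_cast hs0
      rw [hφv]
      exact_mod_cast (Int.toNat_of_nonneg hs0').symm
  -- image is convex independent
  have himg_CI : ConvexIndependentSet (φ '' V) := by
    rintro _ ⟨v, hv, rfl⟩ hmem
    apply hVCI v hv
    have h1 : φ '' V \ {φ v} = φ '' (V \ {v}) := by
      rw [Set.image_diff hφinj, Set.image_singleton]
    rw [h1] at hmem
    have h2 : convexHull ℝ (φ '' (V \ {v})) = φ '' convexHull ℝ (V \ {v}) := by
      have := φA.image_convexHull (V \ {v})
      exact this.symm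
    rw [h2] at hmem
    obtain ⟨w, hw, hww⟩ := hmem
    rwa [hφinj hww] at hw
  -- finiteness
  have hSfin : (φ '' V).Finite := (grid_finite n Δ).subset himg_grid
  have hVfin : V.Finite := hSfin.of_finite_image (hφinj.injOn)
  have hcard : (φ '' V).ncard = V.ncard := Set.ncard_image_of_injective V hφinj
  -- membership in the gamma set
  have hmem : V.ncard ∈ {c : ℕ | ∃ M : Finset (Fin n → ℝ), M.card = c ∧
      (M : Set (Fin n → ℝ)) ⊆ grid n Δ ∧ ConvexIndependentSet (M : Set (Fin n → ℝ))} := by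
    refine ⟨hSfin.toFinset, ?_, ?_, ?_⟩
    · rw [← hcard, Set.ncard_eq_toFinset_card _ hSfin]
    · rw [hSfin.coe_toFinset]; exact himg_grid
    · rw [hSfin.coe_toFinset]; exact himg_CI
  -- bounded above
  have hbdd : BddAbove {c : ℕ | ∃ M : Finset (Fin n → ℝ), M.card = c ∧
      (M : Set (Fin n → ℝ)) ⊆ grid n Δ ∧ ConvexIndependentSet (M : Set (Fin n → ℝ))} := by
    refine ⟨(grid n Δ).ncard, ?_⟩
    rintro k ⟨N, rfl, hNsub, -⟩
    rw [← Set.ncard_coe_finset]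
    exact Set.ncard_le_ncard hNsub (grid_finite n Δ)
  exact le_csSup hbdd hmem
end

section
/- For every vertex v of the integer hull P_I = conv(P ∩ Z^n), there exists a Δ-deep base B of P such that ‖b_B − A_B v‖_∞ ≤ Δ − 1, i.e., all n slacks of v on the rows indexed by B are at most Δ − 1. -/
open Matrix Set

lemma detSnoc_eq_sum {R : Type*} [CommRing R] {n : ℕ} (p : Fin n → (Fin (n+1) → R))
    (x : Fin (n+1) → R) :
    (Matrix.of (Fin.snoc p x)).det
      = ∑ j, x j * (Matrix.of (Fin.snoc p (Pi.single j 1))).det := by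
  classical
  set L := (Matrix.detRowAlternating :
      (Fin (n+1) → R) [⋀^Fin (n+1)]→ₗ[R] R).toMultilinearMap.toLinearMap
      (Fin.snoc p x) (Fin.last n) with hLdef
  have hL : ∀ y : Fin (n+1) → R, L y = (Matrix.of (Fin.snoc p y)).det := by
    intro y
    simp only [hLdef, MultilinearMap.toLinearMap_apply, Fin.update_snoc_last]
    rfl
  have hx : x = ∑ j, x j • (Pi.single j 1 : Fin (n+1) → R) := by
    ext k
    simp [Pi.single_apply, Finset.sum_apply]
  calc (Matrix.of (Fin.snoc p x)).det = L x := (hL x).symm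
    _ = L (∑ j, x j • (Pi.single j 1 : Fin (n+1) → R)) := by rw [← hx]
    _ = ∑ j, x j * (Matrix.of (Fin.snoc p (Pi.single j 1))).det := by
        rw [map_sum]
        refine Finset.sum_congr rfl fun j _ => ?_
        rw [LinearMap.map_smul, hL, smul_eq_mul]

/-- Casting an integer snoc-matrix to the reals. -/
lemma map_snoc_cast {n' n : ℕ} (p : Fin n' → (Fin n → ℤ)) (x : Fin n → ℤ) :
    (Matrix.of (Fin.snoc p x) : Matrix (Fin (n'+1)) (Fin n) ℤ).map (fun a => (a : ℝ))
      = Matrix.of (Fin.snoc (fun k j => ((p k j : ℤ) : ℝ)) (fun j => ((x j : ℤ) : ℝ))) := by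
  ext k j
  refine Fin.lastCases ?_ ?_ k <;>
    simp [Matrix.map_apply, Fin.snoc_last, Fin.snoc_castSucc]

lemma exists_direction {m n : ℕ} (A : Matrix (Fin m) (Fin n) ℤ) (F : Set (Fin m))
    (hrank : (matR A).rank = n)
    (hF : Submodule.span ℝ (matR A '' F) ≠ ⊤) :
    ∃ d : Fin n → ℤ, d ≠ 0 ∧ (∀ i ∈ F, A.mulVec d i = 0) ∧
      ∀ i, (A.mulVec d i).natAbs ≤ maxAbsSubdet A := by
  classical
  have hspanall : Submodule.span ℝ (Set.range (matR A)) = ⊤ := by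
    apply Submodule.eq_top_of_finrank_eq
    rw [show Submodule.span ℝ (Set.range (matR A)) = Submodule.span ℝ (Set.range (matR A).row) from rfl,
      ← Matrix.rank_eq_finrank_span_row, hrank, Module.finrank_fin_fun]
  -- n is positive
  rcases Nat.eq_zero_or_pos n with hn | hn
  · exfalso
    apply hF
    subst hn
    rw [eq_top_iff]
    intro x _
    have hx : x = 0 := funext fun j => absurd j.2 (by omega)
    rw [hx]
    exact Submodule.zero_mem _
  obtain ⟨n', rfl⟩ : ∃ n', n = n' + 1 := ⟨n - 1, (Nat.succ_pred_eq_of_pos hn).symm⟩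
  -- independent spanning subset of the F-rows
  obtain ⟨t0, ht0sub, ht0span, ht0ind⟩ := exists_linearIndependent ℝ (matR A '' F)
  have ht0sub' : t0 ⊆ Set.range (matR A) :=
    ht0sub.trans (Set.image_subset_range _ _)
  set bs := LinearIndepOn.extend (v := id) ht0ind ht0sub' with hbsdef
  have hbsub : bs ⊆ Set.range (matR A) := LinearIndepOn.extend_subset (v := id) ht0ind ht0sub'
  have ht0bs : t0 ⊆ bs := LinearIndepOn.subset_extend (v := id) ht0ind ht0sub'
  have hbind : LinearIndependent ℝ ((↑) : bs → (Fin (n'+1) → ℝ)) :=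
    LinearIndepOn.linearIndepOn_extend (v := id) ht0ind ht0sub'
  have hbspan : Submodule.span ℝ bs = ⊤ := by
    rw [LinearIndepOn.span_extend_eq_span ht0ind ht0sub', hspanall]
  have hbfin : bs.Finite := hbind.setFinite
  haveI : Fintype bs := hbfin.fintype
  have hbcard : bs.toFinset.card = n' + 1 := by
    have := finrank_span_set_eq_card hbind
    rw [hbspan] at this
    simpa [Module.finrank_fin_fun] using this.symm
  -- pick u ∈ bs \ t0
  have hnotsub : ¬ bs ⊆ t0 := by
    intro h
    apply hF
    rw [← ht0span]
    have : t0 = bs := Set.Subset.antisymm ht0bs h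
    rw [this, hbspan]
  obtain ⟨u, hub, hut0⟩ := Set.not_subset.mp hnotsub
  have hugF : u ∈ bs.toFinset := by simpa using hub
  set gF := bs.toFinset.erase u with hgFdef
  have hgcard : gF.card = n' := by
    rw [hgFdef, Finset.card_erase_of_mem hugF, hbcard]
    omega
  set e : Fin n' ≃ {x // x ∈ gF} := (gF.equivFinOfCardEq hgcard).symm with hedef
  have hemem : ∀ k, ((e k : {x // x ∈ gF}) : Fin (n'+1) → ℝ) ∈ bs ∧
      ((e k : {x // x ∈ gF}) : Fin (n'+1) → ℝ) ≠ u := by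
    intro k
    have h := (e k).2
    exact ⟨Set.mem_toFinset.mp (Finset.mem_of_mem_erase h), Finset.ne_of_mem_erase h⟩
  have hrange : ∀ k, ∃ i, matR A i = ((e k : {x // x ∈ gF}) : Fin (n'+1) → ℝ) :=
    fun k => hbsub (hemem k).1
  set g : Fin n' → Fin m := fun k => (hrange k).choose with hgdef
  have hg : ∀ k, matR A (g k) = ((e k : {x // x ∈ gF}) : Fin (n'+1) → ℝ) :=
    fun k => (hrange k).choose_spec
  set gInt : Fin n' → (Fin (n'+1) → ℤ) := fun k => A (g k) with hgIntdef
  set gR : Fin n' → (Fin (n'+1) → ℝ) := fun k => matR A (g k) with hgRdef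
  set d : Fin (n'+1) → ℤ := fun j => (Matrix.of (Fin.snoc gInt (Pi.single j 1))).det
    with hddef
  have hdot : ∀ x : Fin (n'+1) → ℤ, (Matrix.of (Fin.snoc gInt x)).det = x ⬝ᵥ d := by
    intro x
    rw [detSnoc_eq_sum]
    rfl
  have hgRcast : ∀ k, (fun j => ((gInt k j : ℤ) : ℝ)) = gR k := by
    intro k
    ext j
    simp [hgIntdef, hgRdef, matR, Matrix.map_apply]
  have hcast : ∀ x : Fin (n'+1) → ℤ,
      (((Matrix.of (Fin.snoc gInt x)).det : ℤ) : ℝ)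
        = (Matrix.of (Fin.snoc gR (fun j => ((x j : ℤ) : ℝ)))).det := by
    intro x
    have h0 : (((Matrix.of (Fin.snoc gInt x)).det : ℤ) : ℝ)
        = ((Matrix.of (Fin.snoc gInt x)).map (fun a : ℤ => (a : ℝ))).det :=
      RingHom.map_det (Int.castRingHom ℝ) _
    rw [h0, map_snoc_cast gInt x]
    have h1 : (fun k j => ((gInt k j : ℤ) : ℝ)) = gR := funext hgRcast
    rw [h1]
  set dR : Fin (n'+1) → ℝ := fun j => (d j : ℝ) with hdRdef
  have hsingle : ∀ j, (Matrix.of (Fin.snoc gR (Pi.single j 1))).det = dR j := by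
    intro j
    have h1 := hcast (Pi.single j 1)
    have h2 : (fun j' => (((Pi.single j 1 : Fin (n'+1) → ℤ) j' : ℤ) : ℝ))
        = (Pi.single j 1 : Fin (n'+1) → ℝ) := by
      ext j'
      simp [Pi.single_apply]
    rw [h2] at h1
    rw [← h1]
  have hdotR : ∀ y : Fin (n'+1) → ℝ, (Matrix.of (Fin.snoc gR y)).det = y ⬝ᵥ dR := by
    intro y
    rw [detSnoc_eq_sum]
    exact Finset.sum_congr rfl fun j _ => by rw [hsingle]
  have hvanish : ∀ y ∈ Submodule.span ℝ ((gF : Set (Fin (n'+1) → ℝ))), y ⬝ᵥ dR = 0 := by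
    intro y hy
    induction hy using Submodule.span_induction with
    | mem y hy =>
      set k := e.symm ⟨y, hy⟩ with hkdef
      have hk : gR k = y := by
        rw [hgRdef]
        simp only []
        rw [hg k, hkdef, Equiv.apply_symm_apply]
      rw [← hdotR]
      refine Matrix.det_zero_of_row_eq (i := Fin.castSucc k) (j := Fin.last n')
        (Fin.castSucc_lt_last k).ne ?_
      have h5 : (Fin.snoc gR y : Fin (n'+1) → (Fin (n'+1) → ℝ)) (Fin.castSucc k)
          = (Fin.snoc gR y : Fin (n'+1) → (Fin (n'+1) → ℝ)) (Fin.last n') := by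
        rw [Fin.snoc_castSucc, Fin.snoc_last, hk]
      exact h5
    | zero => simp
    | add a b _ _ iha ihb => simp [add_dotProduct, iha, ihb]
    | smul a x _ ih => simp [smul_dotProduct, ih]
  have ht0gF : t0 ⊆ (gF : Set (Fin (n'+1) → ℝ)) := by
    intro y hy
    rw [hgFdef]
    simp only [Finset.coe_erase, Set.mem_diff, Set.mem_singleton_iff, Finset.coe_sort_coe]
    constructor
    · simp only [Finset.mem_coe, Set.mem_toFinset]
      exact ht0bs hy
    · rintro rfl
      exact hut0 hy
  have hFzero : ∀ i ∈ F, A.mulVec d i = 0 := by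
    intro i hi
    have h1 : matR A i ⬝ᵥ dR = 0 := by
      apply hvanish
      have : matR A i ∈ Submodule.span ℝ (matR A '' F) :=
        Submodule.subset_span (Set.mem_image_of_mem _ hi)
      rw [← ht0span] at this
      exact Submodule.span_mono ht0gF this
    have h2 : ((A.mulVec d i : ℤ) : ℝ) = matR A i ⬝ᵥ dR := by
      simp only [Matrix.mulVec, dotProduct, matR, Matrix.map_apply, hdRdef]
      push_cast
      rfl
    rw [h1] at h2
    exact_mod_cast h2
  have hbound : ∀ i, (A.mulVec d i).natAbs ≤ maxAbsSubdet A := by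
    intro i
    set f0 : Fin (n'+1) → Fin m := Fin.snoc g i with hf0def
    have hM : Matrix.of (Fin.snoc gInt (A i)) = A.submatrix f0 id := by
      ext k j
      refine Fin.lastCases ?_ (fun k' => ?_) k
      · simp [hf0def, Fin.snoc_last]
      · simp [hf0def, Fin.snoc_castSucc, hgIntdef]
    have hAd : A.mulVec d i = (A.submatrix f0 id).det := by
      rw [← hM, hdot]
      rfl
    rw [hAd]
    exact Finset.le_sup
      (f := fun f : Fin (n'+1) → Fin m => ((A.submatrix f id).det).natAbs)
      (Finset.mem_univ f0)
  -- d ≠ 0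
  obtain ⟨i0, hi0⟩ := hbsub hub
  have hdne : d ≠ 0 := by
    -- the rows g together with u are linearly independent
    have hgRind : LinearIndependent ℝ gR := by
      have hinj : Function.Injective (fun k : Fin n' => (⟨((e k : {x // x ∈ gF}) :
          Fin (n'+1) → ℝ), (hemem k).1⟩ : bs)) := by
        intro k l h
        have h2 : ((e k : {x // x ∈ gF}) : Fin (n'+1) → ℝ)
            = ((e l : {x // x ∈ gF}) : Fin (n'+1) → ℝ) :=
          congrArg (Subtype.val : bs → (Fin (n'+1) → ℝ)) h
        exact e.injective (Subtype.ext h2)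
      have := hbind.comp _ hinj
      have hgReq : gR = (fun x : bs => (x : Fin (n'+1) → ℝ)) ∘
          (fun k : Fin n' => (⟨((e k : {x // x ∈ gF}) : Fin (n'+1) → ℝ),
            (hemem k).1⟩ : bs)) := by
        funext k
        exact hg k
      rw [hgReq]
      exact this
    have huspan : u ∉ Submodule.span ℝ (Set.range gR) := by
      have hrangegR : Set.range gR ⊆ (fun x : bs => (x : Fin (n'+1) → ℝ)) ''
          {x : bs | (x : Fin (n'+1) → ℝ) ≠ u} := by
        rintro y ⟨k, rfl⟩
        refine ⟨⟨((e k : {x // x ∈ gF}) : Fin (n'+1) → ℝ), (hemem k).1⟩, (hemem k).2, ?_⟩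
        exact (hg k).symm
      intro hu
      have hnot := hbind.notMem_span_image (s := {x : bs | (x : Fin (n'+1) → ℝ) ≠ u})
        (x := ⟨u, hub⟩) (by simp)
      exact hnot (Submodule.span_mono hrangegR hu)
    have hsnocind : LinearIndependent ℝ (Fin.snoc gR u : Fin (n'+1) → (Fin (n'+1) → ℝ)) :=
      linearIndependent_fin_snoc.mpr ⟨hgRind, huspan⟩
    have hdetR : (Matrix.of (Fin.snoc gR u)).det ≠ 0 := by
      have hisunit : IsUnit (Matrix.of (Fin.snoc gR u)) :=
        Matrix.linearIndependent_rows_iff_isUnit.mp hsnocind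
      exact (Matrix.isUnit_iff_isUnit_det _).mp hisunit |>.ne_zero
    have hcasti0 : (((Matrix.of (Fin.snoc gInt (A i0))).det : ℤ) : ℝ)
        = (Matrix.of (Fin.snoc gR u)).det := by
      rw [hcast (A i0)]
      congr 1
      rw [show (fun j => ((A i0 j : ℤ) : ℝ)) = matR A i0 from rfl, hi0]
    have hdoti0 : A i0 ⬝ᵥ d ≠ 0 := by
      rw [← hdot]
      intro h
      rw [h] at hcasti0
      exact hdetR (by exact_mod_cast hcasti0.symm)
    intro h
    rw [h, dotProduct_zero] at hdoti0
    exact hdoti0 rfl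
  exact ⟨d, hdne, hFzero, hbound⟩

/-- Every vertex `v` of the integer hull admits a `Δ`-deep base `B` with
`‖b_B - A_B v‖_∞ ≤ Δ - 1`. -/
theorem vertex_has_deep_base {m n : ℕ}
    (A : Matrix (Fin m) (Fin n) ℤ) (b : Fin m → ℤ) (Δ : ℕ)
    (hΔ : maxAbsSubdet A = Δ) (hΔ1 : 1 ≤ Δ)
    (hrank : (matR A).rank = n)
    (hfull : affineSpan ℝ (poly A b) = ⊤) :
    ∀ v ∈ Set.extremePoints ℝ (intHull A b),
      ∃ B : Finset (Fin m), DeepBase A b Δ B ∧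
        ∀ i ∈ B, |(b i : ℝ) - (matR A).mulVec v i| ≤ (Δ : ℝ) - 1 := by
  classical
  intro v hv
  have hvmem : v ∈ poly A b ∩ intPts := extremePoints_convexHull_subset hv
  obtain ⟨hvP, hvInt⟩ := hvmem
  choose w hw using hvInt
  have hveq : v = fun j => ((w j : ℤ) : ℝ) := funext hw
  have hmulcast : ∀ (y : Fin n → ℤ) (i : Fin m),
      (matR A).mulVec (fun j => ((y j : ℤ) : ℝ)) i = ((A.mulVec y i : ℤ) : ℝ) := by
    intro y i
    simp only [matR, Matrix.mulVec, dotProduct, Matrix.map_apply]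
    push_cast
    rfl
  have hmulv : ∀ i, (matR A).mulVec v i = ((A.mulVec w i : ℤ) : ℝ) := by
    intro i
    rw [hveq]
    exact hmulcast w i
  have hslack0 : ∀ i, 0 ≤ b i - A.mulVec w i := by
    intro i
    have h := hvP i
    rw [hmulv i] at h
    have : (A.mulVec w i : ℤ) ≤ b i := by exact_mod_cast h
    omega
  set F : Set (Fin m) := {i | b i - A.mulVec w i ≤ (Δ : ℤ) - 1} with hFdef
  have hspan : Submodule.span ℝ (matR A '' F) = ⊤ := by
    by_contra hne
    obtain ⟨d, hd0, hdF, hdb⟩ := exists_direction A F hrank hne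
    have hdbound : ∀ i, |A.mulVec d i| ≤ (Δ : ℤ) := by
      intro i
      have h := hdb i
      rw [hΔ] at h
      rw [Int.abs_eq_natAbs]
      exact_mod_cast h
    have hmem : ∀ y : Fin n → ℤ, (∀ i, A.mulVec y i ≤ b i) →
        (fun j => ((y j : ℤ) : ℝ)) ∈ intHull A b := by
      intro y hy
      apply subset_convexHull
      constructor
      · intro i
        rw [hmulcast]
        exact_mod_cast hy i
      · intro j
        exact ⟨y j, rfl⟩
    have hfeas1 : ∀ i, A.mulVec (w + d) i ≤ b i := by
      intro i
      have hx : A.mulVec (w + d) i = A.mulVec w i + A.mulVec d i := by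
        rw [Matrix.mulVec_add]
        rfl
      rw [hx]
      by_cases hiF : i ∈ F
      · have h0 := hdF i hiF
        have := hslack0 i
        omega
      · have hge : (Δ : ℤ) ≤ b i - A.mulVec w i := by
          have : ¬ (b i - A.mulVec w i ≤ (Δ : ℤ) - 1) := hiF
          omega
        have habs := (abs_le.mp (hdbound i)).2
        omega
    have hfeas2 : ∀ i, A.mulVec (w - d) i ≤ b i := by
      intro i
      have hx : A.mulVec (w - d) i = A.mulVec w i - A.mulVec d i := by
        rw [Matrix.mulVec_sub]
        rfl
      rw [hx]
      by_cases hiF : i ∈ F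
      · have h0 := hdF i hiF
        have := hslack0 i
        omega
      · have hge : (Δ : ℤ) ≤ b i - A.mulVec w i := by
          have : ¬ (b i - A.mulVec w i ≤ (Δ : ℤ) - 1) := hiF
          omega
        have habs := (abs_le.mp (hdbound i)).1
        omega
    set x1 : Fin n → ℝ := fun j => (((w + d) j : ℤ) : ℝ) with hx1def
    set x2 : Fin n → ℝ := fun j => (((w - d) j : ℤ) : ℝ) with hx2def
    have hx1 : x1 ∈ intHull A b := hmem _ hfeas1
    have hx2 : x2 ∈ intHull A b := hmem _ hfeas2
    obtain ⟨-, hext⟩ := mem_extremePoints.mp hv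
    have hseg : v ∈ openSegment ℝ x1 x2 := by
      refine ⟨1/2, 1/2, by norm_num, by norm_num, by norm_num, ?_⟩
      funext j
      rw [hveq]
      simp only [hx1def, hx2def, Pi.add_apply, Pi.sub_apply, Pi.smul_apply, smul_eq_mul]
      push_cast
      ring
    obtain ⟨heq1, -⟩ := hext x1 hx1 x2 hx2 hseg
    apply hd0
    funext j
    have hj := (congrFun heq1 j).trans (hw j)
    simp only [hx1def, Pi.add_apply] at hj
    have : ((w j + d j : ℤ) : ℝ) = ((w j : ℤ) : ℝ) := hj
    have : w j + d j = w j := by exact_mod_cast this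
    simp only [Pi.zero_apply]
    omega
  -- extract a basis among the tight rows
  obtain ⟨t, htsub, htspan, htind⟩ := exists_linearIndependent ℝ (matR A '' F)
  rw [hspan] at htspan
  have htfin : t.Finite := htind.setFinite
  haveI : Fintype t := htfin.fintype
  have htcard : t.toFinset.card = n := by
    have h := finrank_span_set_eq_card htind
    rw [htspan] at h
    simpa [Module.finrank_fin_fun] using h.symm
  have hidx : ∀ y : t, ∃ i, i ∈ F ∧ matR A i = (y : Fin n → ℝ) := by
    intro y
    obtain ⟨i, hiF, hieq⟩ := htsub y.2
    exact ⟨i, hiF, hieq⟩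
  choose idx hidxF hidxEq using hidx
  have hidxinj : Function.Injective idx := by
    intro y1 y2 h
    apply Subtype.ext
    rw [← hidxEq y1, ← hidxEq y2, h]
  set B : Finset (Fin m) := Finset.univ.image idx with hBdef
  have hBcard : B.card = n := by
    rw [hBdef, Finset.card_image_of_injective _ hidxinj, Finset.card_univ]
    rw [← Set.toFinset_card]
    exact htcard
  have hBmem : ∀ i ∈ B, ∃ y : t, idx y = i := by
    intro i hi
    simp only [hBdef, Finset.mem_image] at hi
    obtain ⟨y, -, hy⟩ := hi
    exact ⟨y, hy⟩
  have hBF : ∀ i ∈ B, i ∈ F := by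
    intro i hi
    obtain ⟨y, rfl⟩ := hBmem i hi
    exact hidxF y
  have hrowuniq : ∀ i1 ∈ B, ∀ i2 ∈ B, matR A i1 = matR A i2 → i1 = i2 := by
    intro i1 h1 i2 h2 heq
    obtain ⟨y1, rfl⟩ := hBmem i1 h1
    obtain ⟨y2, rfl⟩ := hBmem i2 h2
    rw [hidxEq y1, hidxEq y2] at heq
    rw [hidxinj.eq_iff]
    exact Subtype.ext heq
  -- the determinant is nonzero
  set iso := B.orderIsoOfFin hBcard with hisodef
  set M : Matrix (Fin n) (Fin n) ℤ :=
    A.submatrix (fun j : Fin n => ((iso j : {x // x ∈ B}) : Fin m)) id with hMdef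
  have hMdet : M.det ≠ 0 := by
    set ψ : Fin n → t := fun j => ⟨matR A ((iso j : {x // x ∈ B}) : Fin m), by
      obtain ⟨y, hy⟩ := hBmem _ (iso j).2
      rw [← hy, hidxEq y]
      exact y.2⟩ with hψdef
    have hψinj : Function.Injective ψ := by
      intro j1 j2 h
      have hrows : matR A ((iso j1 : {x // x ∈ B}) : Fin m)
          = matR A ((iso j2 : {x // x ∈ B}) : Fin m) :=
        congrArg Subtype.val h
      have : ((iso j1 : {x // x ∈ B}) : Fin m) = ((iso j2 : {x // x ∈ B}) : Fin m) :=
        hrowuniq _ (iso j1).2 _ (iso j2).2 hrows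
      exact iso.injective (Subtype.ext this)
    have hindrows : LinearIndependent ℝ
        (fun j : Fin n => matR A ((iso j : {x // x ∈ B}) : Fin m)) := by
      have := htind.comp ψ hψinj
      exact this
    have hisunit : IsUnit ((matR A).submatrix
        (fun j : Fin n => ((iso j : {x // x ∈ B}) : Fin m)) id) :=
      Matrix.linearIndependent_rows_iff_isUnit.mp hindrows
    have hdetR : ((matR A).submatrix
        (fun j : Fin n => ((iso j : {x // x ∈ B}) : Fin m)) id).det ≠ 0 :=
      ((Matrix.isUnit_iff_isUnit_det _).mp hisunit).ne_zero
    intro h0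
    apply hdetR
    have hcast : (((M.det : ℤ)) : ℝ) = ((matR A).submatrix
        (fun j : Fin n => ((iso j : {x // x ∈ B}) : Fin m)) id).det := by
      have h1 : ((matR A).submatrix
          (fun j : Fin n => ((iso j : {x // x ∈ B}) : Fin m)) id)
          = M.map (fun a : ℤ => (a : ℝ)) := rfl
      rw [h1]
      exact RingHom.map_det (Int.castRingHom ℝ) M
    rw [← hcast, h0]
    norm_num
  have hslackB : ∀ i ∈ B, b i - A.mulVec w i ≤ (Δ : ℤ) - 1 := fun i hi => hBF i hi
  refine ⟨B, ⟨hBcard, hMdet, v, ?_, hvP⟩, ?_⟩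
  · intro i hi
    rw [hmulv i]
    have h := hslackB i hi
    have : ((b i : ℤ) : ℝ) - ((A.mulVec w i : ℤ) : ℝ) ≤ (Δ : ℝ) - 1 := by
      have h2 : ((b i - A.mulVec w i : ℤ) : ℝ) ≤ (((Δ : ℤ) - 1 : ℤ) : ℝ) := by
        exact_mod_cast h
      push_cast at h2
      linarith
    linarith
  · intro i hi
    rw [hmulv i]
    have h1 := hslackB i hi
    have h2 := hslack0 i
    have h3 : |b i - A.mulVec w i| ≤ (Δ : ℤ) - 1 := by
      rw [abs_of_nonneg h2]
      exact h1
    have h4 : ((|b i - A.mulVec w i| : ℤ) : ℝ) ≤ (((Δ : ℤ) - 1 : ℤ) : ℝ) := by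
      exact_mod_cast h3
    rw [show (b i : ℝ) - ((A.mulVec w i : ℤ) : ℝ) = ((b i - A.mulVec w i : ℤ) : ℝ) by
      push_cast; ring, ← Int.cast_abs]
    push_cast at h4 ⊢
    linarith
end

section
/- For every vertex v of the integer hull P_I = conv(P ∩ Z^n), the number of large slacks satisfies |{i ∈ {1,…,m} : b_i − (A v)_i ≥ Δ}| ≤ m − n. -/
open Matrix Set

lemma dot_cramer_single {n : ℕ} (B : Matrix (Fin n) (Fin n) ℤ) (k : Fin n) (x : Fin n → ℤ) :
    x ⬝ᵥ (fun j => cramer Bᵀ (Pi.single j 1) k) = (B.updateRow k x).det := by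
  rw [← cramer_transpose_apply]
  have hx : x = ∑ j, x j • (Pi.single j 1 : Fin n → ℤ) := by
    funext l
    simp [Pi.single_apply]
  conv_rhs => rw [hx]
  rw [map_sum]
  have h2 : ∀ j : Fin n, cramer Bᵀ (x j • (Pi.single j 1 : Fin n → ℤ))
      = x j • cramer Bᵀ (Pi.single j 1) := fun j => map_smul _ _ _
  simp only [Finset.sum_apply, h2, Pi.smul_apply, smul_eq_mul]
  simp [dotProduct]


/-- Every vertex `v` of the integer hull has at most `m - n` rows with slack at least `Δ`. -/
theorem vertex_large_slack_count {m n : ℕ}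
    (A : Matrix (Fin m) (Fin n) ℤ) (b : Fin m → ℤ) (Δ : ℕ)
    (hΔ : maxAbsSubdet A = Δ) (hΔ1 : 1 ≤ Δ)
    (hrank : (matR A).rank = n)
    (hfull : affineSpan ℝ (poly A b) = ⊤) :
    ∀ v ∈ Set.extremePoints ℝ (intHull A b),
      {i : Fin m | (Δ : ℝ) ≤ (b i : ℝ) - (matR A).mulVec v i}.ncard ≤ m - n := by
  classical
  intro v hv
  have hvmem : v ∈ poly A b ∩ intPts := extremePoints_convexHull_subset hv
  obtain ⟨hvP, hvZ⟩ := hvmem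
  set r : Fin m → (Fin n → ℝ) := fun i => matR A i with hr
  set S : Finset (Fin m) :=
    Finset.univ.filter (fun i => (b i : ℝ) - (matR A).mulVec v i < (Δ : ℝ)) with hS
  -- main claim: rows in S span everything
  have hspan : Submodule.span ℝ (r '' ↑S) = ⊤ := by
    by_contra hW
    set W : Submodule ℝ (Fin n → ℝ) := Submodule.span ℝ (r '' ↑S) with hWdef
    -- rows of A span everything
    have hrowspan : Submodule.span ℝ (Set.range r) = ⊤ := by
      apply Submodule.eq_top_of_finrank_eq
      have h1 := (matR A).rank_eq_finrank_span_row
      rw [hrank] at h1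
      rw [show Set.range r = Set.range (matR A).row from rfl, ← h1, Module.finrank_pi ℝ, Fintype.card_fin]
    obtain ⟨s₀, hs₀sub, hs₀span, hs₀li⟩ := exists_linearIndependent ℝ (r '' ↑S)
    have hs₀range : s₀ ⊆ Set.range r := hs₀sub.trans (Set.image_subset_range _ _)
    have hs₀li' : LinearIndepOn ℝ id s₀ := hs₀li
    set bset : Set (Fin n → ℝ) := hs₀li'.extend hs₀range with hbdef
    have hbsub : bset ⊆ Set.range r := hs₀li'.extend_subset hs₀range
    have hs₀bsub : s₀ ⊆ bset := hs₀li'.subset_extend hs₀range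
    have hbspan : Submodule.span ℝ bset = ⊤ := by
      rw [hs₀li'.span_extend_eq_span hs₀range, hrowspan]
    have hbli : LinearIndependent ℝ (fun x : bset => (x : Fin n → ℝ)) :=
      hs₀li'.linearIndepOn_extend hs₀range
    have hbfin : bset.Finite := hbli.setFinite
    haveI : Fintype bset := hbfin.fintype
    have hbcard : Fintype.card bset = n := by
      have := finrank_span_set_eq_card hbli
      rw [hbspan] at this
      rw [← Set.toFinset_card, ← this, finrank_top, Module.finrank_pi ℝ, Fintype.card_fin]
    -- an element of bset outside W
    have hex : ∃ w ∈ bset, w ∉ W := by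
      by_contra h
      push_neg at h
      exact hW (top_le_iff.mp (hbspan ▸ Submodule.span_le.mpr h))
    obtain ⟨w, hwb, hwW⟩ := hex
    set e : Fin n ≃ bset := (Fintype.equivFinOfCardEq hbcard).symm with he
    set k : Fin n := e.symm ⟨w, hwb⟩ with hk
    have hek : (e k : Fin n → ℝ) = w := by rw [hk, Equiv.apply_symm_apply]
    have hTex : ∀ j : Fin n, ∃ i : Fin m, r i = (e j : Fin n → ℝ) := fun j => hbsub (e j).2
    set T : Fin n → Fin m := fun j => (hTex j).choose with hT
    have hTspec : ∀ j, r (T j) = (e j : Fin n → ℝ) := fun j => (hTex j).choose_spec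
    set B : Matrix (Fin n) (Fin n) ℤ := A.submatrix T id with hB
    have hmatRB : matR B = (matR A).submatrix T id := by ext j l; rfl
    -- det B ≠ 0
    have hrowsB : (fun j => (matR B) j) = (fun j => (e j : Fin n → ℝ)) := by
      funext j; rw [hmatRB]; exact hTspec j
    have hliB : LinearIndependent ℝ (fun j => (matR B) j) := by
      rw [hrowsB]
      exact hbli.comp e (Equiv.injective e)
    have hdetRB : (matR B).det ≠ 0 := by
      have := linearIndependent_rows_iff_isUnit.mp hliB
      exact isUnit_iff_ne_zero.mp ((isUnit_iff_isUnit_det _).mp this)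
    have hdetB : B.det ≠ 0 := by
      intro h
      apply hdetRB
      have : (matR B).det = ((B.det : ℤ) : ℝ) :=
        (RingHom.map_det (Int.castRingHom ℝ) B).symm
      rw [this, h]; simp
    -- the integer vector c
    set c : Fin n → ℤ := fun j => cramer Bᵀ (Pi.single j 1) k with hc
    have hkey : ∀ x : Fin n → ℤ, x ⬝ᵥ c = (B.updateRow k x).det :=
      fun x => dot_cramer_single B k x
    set cR : Fin n → ℝ := fun j => ((c j : ℤ) : ℝ) with hcR
    have hdotcast : ∀ i : Fin m, r i ⬝ᵥ cR = ((A i ⬝ᵥ c : ℤ) : ℝ) := by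
      intro i
      simp only [dotProduct, hcR, hr, matR, Matrix.map_apply, Int.cast_sum, Int.cast_mul]
    -- bound
    have hbound : ∀ i : Fin m, (A i ⬝ᵥ c).natAbs ≤ Δ := by
      intro i
      have heq : B.updateRow k (A i) = A.submatrix (Function.update T k i) id := by
        ext j l
        by_cases h : j = k <;>
          simp [Matrix.updateRow_apply, Function.update_apply, h, hB]
      rw [hkey, heq, ← hΔ]
      exact Finset.le_sup (f := fun f : Fin n → Fin m => ((A.submatrix f id).det).natAbs)
        (Finset.mem_univ (Function.update T k i))
    -- orthogonality to rows in S
    set fR : (Fin n → ℝ) →ₗ[ℝ] ℝ :=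
      { toFun := fun x => x ⬝ᵥ cR
        map_add' := fun a b => add_dotProduct a b cR
        map_smul' := fun t a => smul_dotProduct t a cR } with hfR
    have hfR_apply : ∀ x, fR x = x ⬝ᵥ cR := by intro x; rw [hfR]; rfl
    have hker : W ≤ LinearMap.ker fR := by
      rw [hWdef, ← hs₀span]
      apply Submodule.span_le.mpr
      intro u hu
      have hub : u ∈ bset := hs₀bsub hu
      have huW : u ∈ W := by
        rw [hWdef, ← hs₀span]
        exact Submodule.subset_span hu
      have hune : u ≠ w := fun h => hwW (h ▸ huW)
      have hej : (e (e.symm ⟨u, hub⟩) : Fin n → ℝ) = u := by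
        rw [Equiv.apply_symm_apply]
      have hjk : e.symm ⟨u, hub⟩ ≠ k := by
        intro h
        apply hune
        rw [← hej, h, hek]
      have hfu : fR u = 0 := by
        rw [hfR_apply]
        rw [← hej, ← hTspec (e.symm ⟨u, hub⟩), hdotcast]
        have hz : A (T (e.symm ⟨u, hub⟩)) ⬝ᵥ c = 0 := by
          rw [hkey]
          have hBj : A (T (e.symm ⟨u, hub⟩)) = B (e.symm ⟨u, hub⟩) := rfl
          rw [hBj]
          exact det_updateRow_eq_zero hjk
        rw [hz]; simp
      simpa [LinearMap.mem_ker] using hfu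
    have horth : ∀ i ∈ S, A i ⬝ᵥ c = 0 := by
      intro i hiS
      have hmem : r i ∈ W := by
        rw [hWdef]
        exact Submodule.subset_span (Set.mem_image_of_mem r (by exact_mod_cast hiS))
      have h0 : fR (r i) = 0 := LinearMap.mem_ker.mp (hker hmem)
      rw [hfR_apply] at h0
      have h1 : ((A i ⬝ᵥ c : ℤ) : ℝ) = 0 := by rw [← hdotcast]; exact h0
      exact_mod_cast h1
    have habs : ∀ i : Fin m, |((A i ⬝ᵥ c : ℤ) : ℝ)| ≤ (Δ : ℝ) := by
      intro i
      rw [← Int.cast_abs]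
      have h2 : |A i ⬝ᵥ c| ≤ (Δ : ℤ) := by
        rw [Int.abs_eq_natAbs]
        exact_mod_cast hbound i
      exact_mod_cast h2
    have hP : ∀ ε : ℝ, |ε| ≤ 1 → v + ε • cR ∈ poly A b := by
      intro ε hε i
      have hlin : (matR A).mulVec (v + ε • cR) i
          = (matR A).mulVec v i + ε * (r i ⬝ᵥ cR) := by
        simp [Matrix.mulVec, dotProduct_add, dotProduct_smul, hr, smul_eq_mul, mul_comm]
      rw [hlin, hdotcast]
      by_cases hiS : i ∈ S
      · rw [horth i hiS]
        simpa using hvP i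
      · have hsl : (Δ : ℝ) ≤ (b i : ℝ) - (matR A).mulVec v i := by
          have hns := hiS
          rw [hS, Finset.mem_filter] at hns
          push_neg at hns
          exact hns (Finset.mem_univ i)
        have hd := abs_le.mp (habs i)
        have he := abs_le.mp hε
        have hΔ0 : (0:ℝ) ≤ (Δ : ℝ) := by positivity
        nlinarith [hvP i]
    have hw1 : v + cR ∈ poly A b ∩ intPts := by
      constructor
      · have h3 := hP 1 (by norm_num)
        simpa using h3
      · intro j
        obtain ⟨z, hz⟩ := hvZ j
        refine ⟨z + c j, ?_⟩
        simp [hz, hcR]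
    have hw2 : v - cR ∈ poly A b ∩ intPts := by
      constructor
      · have h3 := hP (-1) (by norm_num)
        have h4 : v + (-1 : ℝ) • cR = v - cR := by
          funext j; simp; ring
        rwa [h4] at h3
      · intro j
        obtain ⟨z, hz⟩ := hvZ j
        refine ⟨z - c j, ?_⟩
        simp [hz, hcR]
    obtain ⟨hvH, hvext⟩ := hv
    have hseg : v ∈ openSegment ℝ (v + cR) (v - cR) := by
      refine ⟨1/2, 1/2, by norm_num, by norm_num, by norm_num, ?_⟩
      funext j
      simp
      ring
    obtain ⟨h1, h2⟩ := (mem_extremePoints.mp ⟨hvH, hvext⟩).2 _ (subset_convexHull ℝ _ hw1) _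
      (subset_convexHull ℝ _ hw2) hseg
    have hcR0 : cR = 0 := by
      have h5 : v + cR = v := h1
      funext j
      have h6 := congrFun h5 j
      simpa using h6
    have hc0 : c = 0 := by
      funext j
      have h7 := congrFun hcR0 j
      simp only [hcR, Pi.zero_apply] at h7
      simp only [Pi.zero_apply]
      exact_mod_cast h7
    apply hdetB
    have h8 : B k ⬝ᵥ c = B.det := by rw [hkey, updateRow_eq_self]
    rw [hc0] at h8
    simpa using h8.symm
  -- counting
  have hcard : n ≤ S.card := by
    have himg : r '' ↑S = ↑(S.image r) := (Finset.coe_image).symm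
    have hle : Module.finrank ℝ (Submodule.span ℝ (r '' ↑S)) ≤ (S.image r).card := by
      rw [himg]
      have h9 := finrank_span_finset_le_card (R := ℝ) (S.image r)
      rwa [Set.finrank] at h9
    have h2 : Module.finrank ℝ (Fin n → ℝ) = n := by
      rw [Module.finrank_pi ℝ, Fintype.card_fin]
    calc n = Module.finrank ℝ (Fin n → ℝ) := h2.symm
      _ = Module.finrank ℝ (⊤ : Submodule ℝ (Fin n → ℝ)) := (finrank_top ℝ _).symm
      _ = Module.finrank ℝ (Submodule.span ℝ (r '' ↑S)) := by rw [hspan]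
      _ ≤ (S.image r).card := hle
      _ ≤ S.card := Finset.card_image_le
  have hsub2 : {i : Fin m | (Δ : ℝ) ≤ (b i : ℝ) - (matR A).mulVec v i} ⊆ (↑S : Set (Fin m))ᶜ := by
    intro i hi
    simp only [Set.mem_compl_iff, Finset.mem_coe, hS, Finset.mem_filter]
    rintro ⟨-, hlt⟩
    exact absurd hi (not_le.mpr hlt)
  have hfin2 := Set.ncard_le_ncard hsub2 (Set.toFinite _)
  have hcompl : ((↑S : Set (Fin m))ᶜ).ncard = m - S.card := by
    rw [← Finset.coe_compl, Set.ncard_coe_finset, Finset.card_compl, Fintype.card_fin]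
  rw [hcompl] at hfin2
  exact hfin2.trans (Nat.sub_le_sub_left hcard m)
end
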